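/- arXiv:1706.07317 — 8 statements merged into one kernel-verified Lean document; each statement's English description precedes it below -/
import Mathlib

section
/- Let G be a compactly generated t.d.l.c. group such that G has no infinite discrete normal subgroup and such that there exists a compact open subgroup V of G whose normal core in G is trivial. Then every non-trivial closed normal subgroup of G contains a minimal non-trivial closed normal subgroup of G. -/
open scoped Pointwise

open scoped Pointwise

/-- The quasi-center of a topological group: the set of elements with open centralizer. -/
def QuasiCenter (G : Type*) [Group G] [TopologicalSpace G] : Set G :=
  {g : G | IsOpen ((Subgroup.centralizer {g} : Subgroup G) : Set G)}

/-- A topological group is compactly generated if it is generated by a compact subset. -/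
def IsCompactlyGeneratedGroup (G : Type*) [Group G] [TopologicalSpace G] : Prop :=
  ∃ S : Set G, IsCompact S ∧ Subgroup.closure S = ⊤

/-- A t.d.l.c. group is regionally expansive if it has a compactly generated open subgroup `O`
together with a compact open subgroup `W` of `O` whose normal core in `O` is trivial. -/
def RegionallyExpansive (G : Type*) [Group G] [TopologicalSpace G] : Prop :=
  ∃ O W : Subgroup G,
    IsOpen (O : Set G) ∧
    (∃ S : Set G, S ⊆ (O : Set G) ∧ IsCompact S ∧ Subgroup.closure S = O) ∧
    W ≤ O ∧ IsOpen (W : Set G) ∧ IsCompact (W : Set G) ∧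
    (W.subgroupOf O).normalCore = ⊥

/-- A topological group is topologically simple if it is non-trivial and its only closed
normal subgroups are the trivial subgroup and the whole group. -/
def TopologicallySimple (G : Type*) [Group G] [TopologicalSpace G] : Prop :=
  Nontrivial G ∧ ∀ N : Subgroup G, N.Normal → IsClosed (N : Set G) → N = ⊥ ∨ N = ⊤

/-- The monolith: the intersection of all non-trivial closed normal subgroups. -/
def Monolith (G : Type*) [Group G] [TopologicalSpace G] : Subgroup G :=
  ⨅ (N : Subgroup G) (_ : N ≠ ⊥) (_ : N.Normal) (_ : IsClosed (N : Set G)), N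

/-- A topological group is monolithic if its monolith is non-trivial. -/
def Monolithic (G : Type*) [Group G] [TopologicalSpace G] : Prop :=
  Monolith G ≠ ⊥

/-- A t.d.l.c. group is robustly monolithic if it is monolithic and the monolith is
non-discrete, regionally expansive and topologically simple. -/
def RobustlyMonolithic (G : Type*) [Group G] [TopologicalSpace G] : Prop :=
  Monolithic G ∧ ¬ DiscreteTopology ↥(Monolith G) ∧
    RegionallyExpansive ↥(Monolith G) ∧ TopologicallySimple ↥(Monolith G)

/-- [A]-semisimple: trivial quasi-center and no non-trivial abelian locally normal subgroup. -/
def ASemisimple (G : Type*) [Group G] [TopologicalSpace G] : Prop :=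
  QuasiCenter G = {1} ∧
    ∀ H : Subgroup G, IsOpen ((Subgroup.normalizer (H : Set G) : Subgroup G) : Set G) →
      (∀ a ∈ H, ∀ b ∈ H, a * b = b * a) → H = ⊥

/-- A minimal non-trivial closed normal subgroup. -/
def IsMinimalClosedNormal {G : Type*} [Group G] [TopologicalSpace G] (N : Subgroup G) : Prop :=
  N ≠ ⊥ ∧ N.Normal ∧ IsClosed (N : Set G) ∧
    ∀ M : Subgroup G, M ≠ ⊥ → M.Normal → IsClosed (M : Set G) → M ≤ N → M = N

/-- The quasi-centralizer of a subgroup `K` in `G`: the set of elements of `G` centralizing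
some open subgroup of `K`. -/
def QuasiCentralizer {G : Type*} [Group G] [TopologicalSpace G] (K : Subgroup G) : Set G :=
  {g : G | ∃ V : Subgroup G, V ≤ K ∧ IsOpen {k : ↥K | (k : G) ∈ V} ∧ ∀ v ∈ V, g * v = v * g}

/-- A SIN-group: a basis of identity neighborhoods consisting of conjugation-invariant
open sets. -/
def SINGroup (G : Type*) [Group G] [TopologicalSpace G] : Prop :=
  ∀ U ∈ nhds (1 : G), ∃ V : Set G, IsOpen V ∧ (1 : G) ∈ V ∧ V ⊆ U ∧
    ∀ g x : G, x ∈ V → g * x * g⁻¹ ∈ V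

/-- The quasi-centralizer of `K` in `H`: elements of `H` centralizing an open subgroup of `K`. -/
def QuasiCentralizerIn {G : Type*} [Group G] [TopologicalSpace G] (H K : Subgroup G) : Set G :=
  {h : G | h ∈ H ∧ ∃ V : Subgroup G, V ≤ K ∧ IsOpen {k : ↥K | (k : G) ∈ V} ∧
    ∀ v ∈ V, h * v = v * h}

/-- The commensurator of `K` in `H`: elements `h ∈ H` such that `K` and `hKh⁻¹` are
commensurate. -/
def CommensuratorIn {G : Type*} [Group G] (H K : Subgroup G) : Set G :=
  {h : G | h ∈ H ∧ Subgroup.Commensurable K (Subgroup.map (MulAut.conj h).toMonoidHom K)}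

/-- Topologically characteristically simple: the only closed subgroups invariant under every
topological group automorphism are trivial and the whole group. -/
def TopologicallyCharacteristicallySimple (G : Type*) [Group G] [TopologicalSpace G] : Prop :=
  ∀ N : Subgroup G, IsClosed (N : Set G) →
    (∀ φ : G ≃* G, Continuous ⇑φ → Continuous ⇑φ.symm → Subgroup.map φ.toMonoidHom N = N) →
    N = ⊥ ∨ N = ⊤

lemma aux_discrete {G : Type*} [Group G] [TopologicalSpace G] [IsTopologicalGroup G]
    (M V : Subgroup G) (hVopen : IsOpen (V : Set G))
    (htriv : ∀ x, x ∈ M → x ∈ V → x = 1) : DiscreteTopology ↥M := by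
  refine discreteTopology_iff_isOpen_singleton.mpr (fun a => ?_)
  have h1 : IsOpen {x : ↥M | (x : G) ∈ V} :=
    (continuous_subtype_val).isOpen_preimage _ hVopen
  have heq : {x : ↥M | (x : G) ∈ V} = {1} := by
    ext x
    simp only [Set.mem_setOf_eq, Set.mem_singleton_iff]
    exact ⟨fun hx => Subtype.ext (htriv x x.2 hx), fun h => h ▸ V.one_mem⟩
  have h1' : IsOpen ({1} : Set ↥M) := heq ▸ h1
  have : {a} = (Homeomorph.mulLeft a) '' ({1} : Set ↥M) := by simp
  rw [this]
  exact (Homeomorph.mulLeft a).isOpen_image.mpr h1'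

lemma aux_C_compact {G : Type*} [Group G] [TopologicalSpace G] [IsTopologicalGroup G] [T2Space G]
    (V : Subgroup G) (hVcompact : IsCompact (V : Set G)) (hVopen : IsOpen (V : Set G))
    (D : Set G) (hD : IsCompact D) :
    IsCompact {v : G | v ∈ V ∧ ∃ d ∈ D, d * v * d⁻¹ ∉ V} := by
  set K : Set (G × G) := ((V : Set G) ×ˢ D) ∩ (fun p : G × G => p.2 * p.1 * p.2⁻¹) ⁻¹' (V : Set G)ᶜ
    with hK
  have hKclosed : IsClosed K := by
    apply IsClosed.inter
    · exact (hVcompact.isClosed).prod hD.isClosed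
    · exact IsClosed.preimage (by fun_prop) (isClosed_compl_iff.mpr hVopen)
  have hKcompact : IsCompact K :=
    (hVcompact.prod hD).of_isClosed_subset hKclosed Set.inter_subset_left
  have : {v : G | v ∈ V ∧ ∃ d ∈ D, d * v * d⁻¹ ∉ V} = Prod.fst '' K := by
    ext v
    constructor
    · rintro ⟨hvV, d, hd, hdv⟩
      exact ⟨(v, d), ⟨⟨hvV, hd⟩, hdv⟩, rfl⟩
    · rintro ⟨⟨v', d⟩, ⟨⟨hvV, hd⟩, hdv⟩, rfl⟩
      exact ⟨hvV, d, hd, hdv⟩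
  rw [this]
  exact hKcompact.image continuous_fst

lemma aux_path {G : Type*} [Group G] (V M : Subgroup G) (hMnormal : M.Normal)
    (S : Set G) (hSgen : Subgroup.closure S = ⊤) :
    ∀ g : G, ∀ m : G, m ∈ M → m ∈ V →
      (g * m * g⁻¹ ∈ V) ∨ (∃ c, c ∈ M ∧ c ∈ V ∧ ∃ d ∈ S ∪ S⁻¹, d * c * d⁻¹ ∉ V) := by
  have hgen : Submonoid.closure (S ∪ S⁻¹) = ⊤ := by
    have := Subgroup.closure_toSubmonoid S
    rw [hSgen] at this
    exact this.symm
  intro g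
  have hg : g ∈ Submonoid.closure (S ∪ S⁻¹) := by rw [hgen]; trivial
  induction hg using Submonoid.closure_induction with
  | mem x hx =>
    intro m hmM hmV
    by_cases h : x * m * x⁻¹ ∈ V
    · exact Or.inl h
    · exact Or.inr ⟨m, hmM, hmV, x, hx, h⟩
  | one =>
    intro m _ hmV
    left; simpa using hmV
  | mul x y hx hy ihx ihy =>
    intro m hmM hmV
    rcases ihy m hmM hmV with h | h
    · rcases ihx (y * m * y⁻¹) (hMnormal.conj_mem m hmM y) h with h' | h'
      · left
        have heq : x * (y * m * y⁻¹) * x⁻¹ = (x * y) * m * (x * y)⁻¹ := by group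
        rwa [heq] at h'
      · exact Or.inr h'
    · exact Or.inr h

theorem stmt0 (G : Type*) [Group G] [TopologicalSpace G] [IsTopologicalGroup G] [T2Space G] [TotallyDisconnectedSpace G] [LocallyCompactSpace G]
    (hcg : IsCompactlyGeneratedGroup G)
    (hnodisc : ∀ N : Subgroup G, N.Normal → DiscreteTopology ↥N → (N : Set G).Finite)
    (V : Subgroup G) (hVcompact : IsCompact (V : Set G)) (hVopen : IsOpen (V : Set G))
    (hVcore : V.normalCore = ⊥)
    (N : Subgroup G) (hN : N ≠ ⊥) (hNnormal : N.Normal) (hNclosed : IsClosed (N : Set G)) :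
    ∃ M : Subgroup G, IsMinimalClosedNormal M ∧ M ≤ N := by
  obtain ⟨S, hScomp, hSgen⟩ := hcg
  by_cases hfin : ∃ F : Subgroup G,
      F ≤ N ∧ F ≠ ⊥ ∧ F.Normal ∧ IsClosed (F : Set G) ∧ (F : Set G).Finite
  · -- there is a finite non-trivial closed normal subgroup inside N
    set A : Set ℕ := {n | ∃ F : Subgroup G,
      (F ≤ N ∧ F ≠ ⊥ ∧ F.Normal ∧ IsClosed (F : Set G) ∧ (F : Set G).Finite) ∧
      (F : Set G).ncard = n} with hA
    have hAne : A.Nonempty := by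
      obtain ⟨F, h⟩ := hfin
      exact ⟨(F : Set G).ncard, F, h, rfl⟩
    obtain ⟨F, ⟨hFN, hFbot, hFnorm, hFclosed, hFfin⟩, hFcard⟩ := Nat.sInf_mem hAne
    refine ⟨F, ⟨hFbot, hFnorm, hFclosed, ?_⟩, hFN⟩
    intro M hMbot hMnorm hMclosed hMF
    have hMsub : (M : Set G) ⊆ (F : Set G) := hMF
    have hMfin : (M : Set G).Finite := hFfin.subset hMsub
    have hMA : (M : Set G).ncard ∈ A := ⟨M, ⟨hMF.trans hFN, hMbot, hMnorm, hMclosed, hMfin⟩, rfl⟩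
    have hle : (F : Set G).ncard ≤ (M : Set G).ncard := hFcard ▸ Nat.sInf_le hMA
    exact SetLike.coe_injective (Set.eq_of_subset_of_ncard_le hMsub hle hFfin)
  · -- no finite ones: use the compactness argument
    set D : Set G := S ∪ S⁻¹ with hD
    set C : Set G := {v : G | v ∈ V ∧ ∃ d ∈ D, d * v * d⁻¹ ∉ V} with hC
    have hCcomp : IsCompact C := aux_C_compact V hVcompact hVopen D (hScomp.union hScomp.inv)
    have h1C : (1 : G) ∉ C := by
      rintro ⟨-, d, -, hd⟩
      exact hd (by simpa using V.one_mem)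
    have hMeet : ∀ M : Subgroup G, M ≤ N → M ≠ ⊥ → M.Normal → IsClosed (M : Set G) →
        ((M : Set G) ∩ C).Nonempty := by
      intro M hMN hMbot hMnorm hMclosed
      have hmex : ∃ m, m ∈ M ∧ m ∈ V ∧ m ≠ 1 := by
        by_contra h
        push_neg at h
        have htriv : ∀ x, x ∈ M → x ∈ V → x = 1 := fun x hx hv => by
          by_contra hne; exact hne (by_contra fun hne' => hne' (h x hx hv))
        have hdisc : DiscreteTopology ↥M := aux_discrete M V hVopen (fun x hx hv => h x hx hv)
        exact hfin ⟨M, hMN, hMbot, hMnorm, hMclosed, hnodisc M hMnorm hdisc⟩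
      obtain ⟨m, hmM, hmV, hm1⟩ := hmex
      have hnotall : ¬ ∀ b : G, b * m * b⁻¹ ∈ V := by
        intro hall
        have hmem : m ∈ V.normalCore := hall
        rw [hVcore, Subgroup.mem_bot] at hmem
        exact hm1 hmem
      push_neg at hnotall
      obtain ⟨b, hb⟩ := hnotall
      rcases aux_path V M hMnorm S hSgen b m hmM hmV with h | ⟨c, hcM, hcV, d, hdD, hdc⟩
      · exact absurd h hb
      · exact ⟨c, hcM, hcV, d, hdD, hdc⟩
    -- Zorn's lemma on the order dual
    set s : Set (Subgroup G)ᵒᵈ := {M | (OrderDual.ofDual M : Subgroup G) ≤ N ∧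
      (OrderDual.ofDual M : Subgroup G) ≠ ⊥ ∧ (OrderDual.ofDual M : Subgroup G).Normal ∧
      IsClosed ((OrderDual.ofDual M : Subgroup G) : Set G)} with hs
    have hNs : OrderDual.toDual N ∈ s := ⟨le_rfl, hN, hNnormal, hNclosed⟩
    have hchaincond : ∀ c ⊆ s, IsChain (· ≤ ·) c → ∀ y ∈ c,
        ∃ ub ∈ s, ∀ z ∈ c, z ≤ ub := by
      intro c hcs hchain y hyc
      set c' : Set (Subgroup G) := OrderDual.ofDual '' c with hc'
      set L : Subgroup G := sInf c' with hL
      have hLle : ∀ z ∈ c, L ≤ (OrderDual.ofDual z : Subgroup G) :=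
        fun z hz => sInf_le ⟨z, hz, rfl⟩
      have hLN : L ≤ N := (hLle y hyc).trans (hcs hyc).1
      have hLnorm : L.Normal := by
        constructor
        intro a ha g
        rw [Subgroup.mem_sInf] at ha ⊢
        rintro p ⟨z, hzc, rfl⟩
        exact ((hcs hzc).2.2.1).conj_mem a (ha _ ⟨z, hzc, rfl⟩) g
      have hLclosed : IsClosed (L : Set G) := by
        rw [hL, Subgroup.coe_sInf]
        exact isClosed_biInter (fun p hp => by
          obtain ⟨z, hzc, rfl⟩ := hp
          exact (hcs hzc).2.2.2)
      have hne : c.Nonempty := ⟨y, hyc⟩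
      haveI : Nonempty c := hne.to_subtype
      have hdir : Directed (· ⊇ ·)
          (fun z : c => ((OrderDual.ofDual z.1 : Subgroup G) : Set G) ∩ C) := by
        intro a b
        rcases hchain.total a.2 b.2 with h | h
        · -- a ≤ b in dual, i.e. ofDual b ≤ ofDual a
          refine ⟨b, Set.inter_subset_inter_left C ?_, subset_rfl⟩
          exact SetLike.coe_subset_coe.mpr h
        · refine ⟨a, subset_rfl, Set.inter_subset_inter_left C ?_⟩
          exact SetLike.coe_subset_coe.mpr h
      obtain ⟨x, hx⟩ := IsCompact.nonempty_iInter_of_directed_nonempty_isCompact_isClosed _ hdir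
        (fun z => hMeet _ (hcs z.2).1 (hcs z.2).2.1 (hcs z.2).2.2.1 (hcs z.2).2.2.2)
        (fun z => hCcomp.inter_left (hcs z.2).2.2.2)
        (fun z => ((hcs z.2).2.2.2).inter hCcomp.isClosed)
      rw [Set.mem_iInter] at hx
      have hxL : x ∈ L := by
        rw [hL, Subgroup.mem_sInf]
        rintro p ⟨z, hzc, rfl⟩
        exact (hx ⟨z, hzc⟩).1
      have hxC : x ∈ C := (hx ⟨y, hyc⟩).2
      have hLbot : L ≠ ⊥ := by
        intro hbot
        rw [hbot, Subgroup.mem_bot] at hxL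
        exact h1C (hxL ▸ hxC)
      exact ⟨OrderDual.toDual L, ⟨hLN, hLbot, hLnorm, hLclosed⟩, fun z hz => hLle z hz⟩
    obtain ⟨m₀, -, hm₀max⟩ := zorn_le_nonempty₀ s hchaincond (OrderDual.toDual N) hNs
    obtain ⟨hm₀N, hm₀bot, hm₀norm, hm₀closed⟩ := hm₀max.1
    refine ⟨OrderDual.ofDual m₀, ⟨hm₀bot, hm₀norm, hm₀closed, ?_⟩, hm₀N⟩
    intro M hMbot hMnorm hMclosed hMle
    have hMs : OrderDual.toDual M ∈ s := ⟨hMle.trans hm₀N, hMbot, hMnorm, hMclosed⟩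
    have hge : (OrderDual.ofDual m₀ : Subgroup G) ≤ M := hm₀max.2 hMs hMle
    exact le_antisymm hMle hge
end

section
/- Let G be a t.d.l.c. group, H a (not necessarily closed) cocompact subgroup of G, and O a compactly generated open subgroup of G. Then there exists a finite subset {h₁, …, hₙ} of H ∩ O such that the subgroup generated by {h₁, …, hₙ} is cocompact in O. -/
open scoped Pointwise

open scoped Pointwise

section AuxLemmas

variable {G' : Type*} [Group G'] [TopologicalSpace G'] [IsTopologicalGroup G']

private lemma aux_mul_subset {A B : Set G'} {K : Subgroup G'} (hA : A ⊆ (K : Set G'))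
    (hB : B ⊆ (K : Set G')) : A * B ⊆ (K : Set G') := by
  rintro g ⟨a, ha, b, hb, rfl⟩
  exact K.mul_mem (hA ha) (hB hb)

private lemma aux_mem_pow_of_closure {S : Set G'} (hsymm : S⁻¹ = S) {g : G'}
    (hg : g ∈ Subgroup.closure S) : ∃ n : ℕ, g ∈ S ^ n := by
  let A : Subgroup G' :=
    { carrier := {x : G' | ∃ n : ℕ, x ∈ S ^ n}
      one_mem' := ⟨0, by simp [pow_zero, Set.mem_one]⟩
      mul_mem' := by
        rintro a b ⟨m, hm⟩ ⟨n, hn⟩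
        exact ⟨m + n, by rw [pow_add]; exact Set.mul_mem_mul hm hn⟩
      inv_mem' := by
        rintro a ⟨n, hn⟩
        refine ⟨n, ?_⟩
        rw [← hsymm, inv_pow]
        exact Set.inv_mem_inv.2 hn }
  exact (Subgroup.closure_le A).2 (fun s hs => ⟨1, by simpa [pow_one] using hs⟩) hg

private lemma aux_vanDantzig (G : Type*) [Group G] [TopologicalSpace G] [IsTopologicalGroup G]
    [T2Space G] [TotallyDisconnectedSpace G] [LocallyCompactSpace G] :
    ∃ U : Subgroup G, IsOpen (U : Set G) ∧ IsCompact (U : Set G) := by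
  obtain ⟨C, hC, hCn⟩ := exists_compact_mem_nhds (1 : G)
  obtain ⟨K, hKclopen, hK1, hKC⟩ :=
    (loc_compact_Haus_tot_disc_of_zero_dim (H := G)).mem_nhds_iff.1 (interior_mem_nhds.2 hCn)
  have hKopen : IsOpen K := hKclopen.2
  have hKcomp : IsCompact K := hC.of_isClosed_subset hKclopen.1 (hKC.trans interior_subset)
  obtain ⟨Vn, hVn, hKV⟩ := compact_open_separated_mul_right hKcomp hKopen Set.Subset.rfl
  set W : Set G := interior Vn ∩ (interior Vn)⁻¹ with hW
  have hWo : IsOpen W := isOpen_interior.inter isOpen_interior.inv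
  have hW1 : (1 : G) ∈ W :=
    ⟨mem_interior_iff_mem_nhds.2 hVn, by simpa using mem_interior_iff_mem_nhds.2 hVn⟩
  have hWsymm : W⁻¹ = W := by
    rw [hW, Set.inter_inv, inv_inv, Set.inter_comm]
  have pow_sub : ∀ n : ℕ, (W ^ n : Set G) ⊆ K := by
    intro n
    induction n with
    | zero =>
      rw [pow_zero]
      intro g hg
      rw [Set.mem_one] at hg
      simpa [hg] using hK1
    | succ n ih =>
      rw [pow_succ]
      rintro g ⟨a, ha, b, hb, rfl⟩
      exact hKV (Set.mul_mem_mul (ih ha) (interior_subset hb.1))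
  have hsub : (Subgroup.closure W : Set G) ⊆ K := by
    intro g hg
    obtain ⟨n, hn⟩ := aux_mem_pow_of_closure hWsymm hg
    exact pow_sub n hn
  have hopen : IsOpen (Subgroup.closure W : Set G) :=
    (Subgroup.closure W).isOpen_of_mem_nhds
      (Filter.mem_of_superset (hWo.mem_nhds hW1) Subgroup.subset_closure)
  exact ⟨Subgroup.closure W, hopen,
    hKcomp.of_isClosed_subset ((Subgroup.closure W).isClosed_of_isOpen hopen) hsub⟩

end AuxLemmas

theorem stmt2 (G : Type*) [Group G] [TopologicalSpace G] [IsTopologicalGroup G] [T2Space G] [TotallyDisconnectedSpace G] [LocallyCompactSpace G]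
    (H : Subgroup G) (hHcc : ∃ X : Set G, IsCompact X ∧ (H : Set G) * X = Set.univ)
    (O : Subgroup G) (hOopen : IsOpen (O : Set G))
    (hOcg : ∃ S : Set G, S ⊆ (O : Set G) ∧ IsCompact S ∧ Subgroup.closure S = O) :
    ∃ T : Finset G, (↑T : Set G) ⊆ ((H ⊓ O : Subgroup G) : Set G) ∧
      ∃ X : Set G, X ⊆ (O : Set G) ∧ IsCompact X ∧
        ((Subgroup.closure (↑T : Set G) : Subgroup G) : Set G) * X = (O : Set G) := by
  classical
  obtain ⟨Xc, hXcomp, hHX⟩ := hHcc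
  obtain ⟨S, hSO, hScomp, hSclO⟩ := hOcg
  obtain ⟨V0, hV0open, hV0comp⟩ := aux_vanDantzig G
  set V : Subgroup G := V0 ⊓ O with hVdef
  have hVopen : IsOpen (V : Set G) := by
    rw [hVdef, Subgroup.coe_inf]; exact hV0open.inter hOopen
  have hVO : V ≤ O := inf_le_right
  have hVcomp : IsCompact (V : Set G) := by
    refine hV0comp.of_isClosed_subset (V.isClosed_of_isOpen hVopen) ?_
    rw [hVdef, Subgroup.coe_inf]; exact Set.inter_subset_left
  have hV1 : (1 : G) ∈ (V : Set G) := V.one_mem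
  have hVOset : (V : Set G) ⊆ (O : Set G) := fun v hv => hVO hv
  -- cover X by left translates of V
  obtain ⟨X₀, -, hX₀cover⟩ := hXcomp.elim_nhds_subcover (fun x => x • (V : Set G))
    (fun x _ => (hVopen.smul x).mem_nhds (Set.mem_smul_set.2 ⟨1, hV1, by simp⟩))
  -- choice of coset representatives
  have rex : ∀ x : G, ∃ o : G, o ∈ (O : Set G) ∧
      (((O : Set G) ∩ ((H : Set G) * (x • (V : Set G)))).Nonempty →
        o ∈ (O : Set G) ∩ ((H : Set G) * (x • (V : Set G)))) := by
    intro x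
    by_cases h : ((O : Set G) ∩ ((H : Set G) * (x • (V : Set G)))).Nonempty
    · exact ⟨h.choose, h.choose_spec.1, fun _ => h.choose_spec⟩
    · exact ⟨1, O.one_mem, fun h' => absurd h' h⟩
  choose rf hrfO hrf using rex
  set R : Finset G := insert 1 (X₀.image rf) with hRdef
  have hR1 : (1 : G) ∈ R := Finset.mem_insert_self 1 _
  have hRO : (R : Set G) ⊆ (O : Set G) := by
    intro ρ hρ
    rcases Finset.mem_insert.1 (Finset.mem_coe.1 hρ) with h | h
    · exact h ▸ O.one_mem
    · obtain ⟨x, -, rfl⟩ := Finset.mem_image.1 h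
      exact hrfO x
  -- key decomposition of elements of O
  have key : ∀ o : G, ∃ l ρ u : G, o ∈ (O : Set G) →
      l ∈ H ∧ l ∈ O ∧ ρ ∈ (R : Set G) ∧ u ∈ (V : Set G) ∧ o = l * ρ * u := by
    intro o
    by_cases ho : o ∈ (O : Set G)
    · have hmem : o ∈ (H : Set G) * Xc := by rw [hHX]; exact Set.mem_univ o
      obtain ⟨h, hh, x', hx', heq⟩ := hmem
      obtain ⟨x, hxX₀, hx'mem⟩ := Set.mem_iUnion₂.1 (hX₀cover hx')
      have hne : ((O : Set G) ∩ ((H : Set G) * (x • (V : Set G)))).Nonempty :=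
        ⟨o, ho, heq ▸ Set.mul_mem_mul hh hx'mem⟩
      obtain ⟨h₀, hh₀, w, hw, heq₀⟩ := (hrf x hne).2
      obtain ⟨u₀, hu₀, rfl⟩ := hw
      obtain ⟨u₁, hu₁, rfl⟩ := hx'mem
      refine ⟨h * h₀⁻¹, rf x, u₀⁻¹ * u₁, fun _ => ?_⟩
      refine ⟨H.mul_mem hh (H.inv_mem hh₀), ?_, ?_, V.mul_mem (V.inv_mem hu₀) hu₁, ?_⟩
      · have hl : h * h₀⁻¹ = o * u₁⁻¹ * u₀ * (rf x)⁻¹ := by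
          rw [← heq, ← heq₀]; simp only [smul_eq_mul]; group
        rw [hl]
        exact O.mul_mem (O.mul_mem (O.mul_mem ho (O.inv_mem (hVO hu₁))) (hVO hu₀))
          (O.inv_mem (hrfO x))
      · exact Finset.mem_coe.2 (Finset.mem_insert_of_mem (Finset.mem_image_of_mem rf hxX₀))
      · rw [← heq, ← heq₀]; simp only [smul_eq_mul]; group
    · exact ⟨1, 1, 1, fun h => absurd h ho⟩
  choose lf ρf uf hkey using key
  -- the compact open symmetric generating set D
  obtain ⟨F, hFS, hFcover⟩ := hScomp.elim_nhds_subcover (fun s => s • (V : Set G))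
    (fun s _ => (hVopen.smul s).mem_nhds (Set.mem_smul_set.2 ⟨1, hV1, by simp⟩))
  set D : Set G := (V : Set G) * (F : Set G) * (V : Set G) ∪
      (V : Set G) * (F : Set G)⁻¹ * (V : Set G) ∪ (V : Set G) with hDdef
  have hFO : (F : Set G) ⊆ (O : Set G) := fun f hf => hSO (hFS f (Finset.mem_coe.1 hf))
  have hFinvO : (F : Set G)⁻¹ ⊆ (O : Set G) := by
    intro f hf
    simpa using O.inv_mem (hFO (Set.mem_inv.1 hf))
  have hDO : D ⊆ (O : Set G) := by
    rw [hDdef]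
    refine Set.union_subset (Set.union_subset ?_ ?_) hVOset
    · exact aux_mul_subset (aux_mul_subset hVOset hFO) hVOset
    · exact aux_mul_subset (aux_mul_subset hVOset hFinvO) hVOset
  have hVD : (V : Set G) ⊆ D := Set.subset_union_right
  have hSD : S ⊆ D := by
    intro s hs
    obtain ⟨f, hf, hsf⟩ := Set.mem_iUnion₂.1 (hFcover hs)
    obtain ⟨u, hu, rfl⟩ := hsf
    have hm : (1 : G) * f * u ∈ (V : Set G) * (F : Set G) * (V : Set G) :=
      Set.mul_mem_mul (Set.mul_mem_mul hV1 (Finset.mem_coe.2 hf)) hu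
    rw [hDdef]
    exact Set.mem_union_left _ (Set.mem_union_left _ (by simpa using hm))
  have hVinv : ((V : Set G))⁻¹ = (V : Set G) := by
    ext x; simp [Set.mem_inv, inv_mem_iff]
  have hDsymm : D⁻¹ = D := by
    have h1 : ((V : Set G) * (F : Set G) * (V : Set G))⁻¹ =
        (V : Set G) * (F : Set G)⁻¹ * (V : Set G) := by
      rw [mul_inv_rev, mul_inv_rev, hVinv, ← mul_assoc]
    have h2 : ((V : Set G) * (F : Set G)⁻¹ * (V : Set G))⁻¹ =
        (V : Set G) * (F : Set G) * (V : Set G) := by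
      rw [mul_inv_rev, mul_inv_rev, hVinv, inv_inv, ← mul_assoc]
    rw [hDdef, Set.union_inv, Set.union_inv, h1, h2, hVinv,
      Set.union_comm ((V : Set G) * (F : Set G)⁻¹ * (V : Set G))
        ((V : Set G) * (F : Set G) * (V : Set G))]
  have hVDmul : (V : Set G) * D ⊆ D := by
    rintro g ⟨v, hv, d, hd, rfl⟩
    rw [hDdef] at hd ⊢
    rcases hd with (hd | hd) | hd
    · obtain ⟨a, ⟨v₁, hv₁, f, hf, rfl⟩, v₂, hv₂, rfl⟩ := hd
      show v * (v₁ * f * v₂) ∈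
        (V : Set G) * (F : Set G) * (V : Set G) ∪ (V : Set G) * (F : Set G)⁻¹ * (V : Set G) ∪ (V : Set G)
      have he : v * (v₁ * f * v₂) = (v * v₁) * f * v₂ := by group
      rw [he]
      exact Set.mem_union_left _ (Set.mem_union_left _
        (Set.mul_mem_mul (Set.mul_mem_mul (V.mul_mem hv hv₁) hf) hv₂))
    · obtain ⟨a, ⟨v₁, hv₁, f, hf, rfl⟩, v₂, hv₂, rfl⟩ := hd
      show v * (v₁ * f * v₂) ∈
        (V : Set G) * (F : Set G) * (V : Set G) ∪ (V : Set G) * (F : Set G)⁻¹ * (V : Set G) ∪ (V : Set G)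
      have he : v * (v₁ * f * v₂) = (v * v₁) * f * v₂ := by group
      rw [he]
      exact Set.mem_union_left _ (Set.mem_union_right _
        (Set.mul_mem_mul (Set.mul_mem_mul (V.mul_mem hv hv₁) hf) hv₂))
    · exact Set.mem_union_right _ (V.mul_mem hv hd)
  have hDcomp : IsCompact D := by
    rw [hDdef]
    exact (((hVcomp.mul F.finite_toSet.isCompact).mul hVcomp).union
      ((hVcomp.mul F.finite_toSet.isCompact.inv).mul hVcomp)).union hVcomp
  -- every element of O is in some power of D
  have hmemD : ∀ g, g ∈ (O : Set G) → ∃ n, g ∈ D ^ n := by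
    intro g hg
    have h1 : Subgroup.closure S ≤ Subgroup.closure D := Subgroup.closure_mono hSD
    rw [← hSclO] at hg
    exact aux_mem_pow_of_closure hDsymm (h1 hg)
  -- finite covers of the translates ρ • D
  have covex : ∀ ρ : G, ∃ C : Finset G, ρ ∈ (R : Set G) →
      ((C : Set G) ⊆ ρ • D ∧ ρ • D ⊆ ⋃ c ∈ C, c • (V : Set G)) := by
    intro ρ
    by_cases hρ : ρ ∈ (R : Set G)
    · obtain ⟨C, hC1, hC2⟩ := (hDcomp.smul ρ).elim_nhds_subcover (fun c => c • (V : Set G))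
        (fun c _ => (hVopen.smul c).mem_nhds (Set.mem_smul_set.2 ⟨1, hV1, by simp⟩))
      exact ⟨C, fun _ => ⟨fun c hc => hC1 c (Finset.mem_coe.1 hc), hC2⟩⟩
    · exact ⟨∅, fun h => absurd h hρ⟩
  choose Cf hCf using covex
  set T : Finset G := R.biUnion (fun ρ => (Cf ρ).image lf) with hTdef
  have hTsub : (T : Set G) ⊆ ((H ⊓ O : Subgroup G) : Set G) := by
    intro t ht
    obtain ⟨ρ, hρR, ht'⟩ := Finset.mem_biUnion.1 (Finset.mem_coe.1 ht)
    obtain ⟨c, hc, rfl⟩ := Finset.mem_image.1 ht'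
    have hρR' : ρ ∈ (R : Set G) := Finset.mem_coe.2 hρR
    have hcD : c ∈ ρ • D := (hCf ρ hρR').1 (Finset.mem_coe.2 hc)
    have hcO : c ∈ (O : Set G) := by
      obtain ⟨d, hd, rfl⟩ := hcD
      simpa [smul_eq_mul] using O.mul_mem (hRO hρR') (hDO hd)
    obtain ⟨hlH, hlO, -, -, -⟩ := hkey c hcO
    exact Subgroup.mem_inf.2 ⟨hlH, hlO⟩
  set M : Subgroup G := Subgroup.closure (T : Set G) with hMdef
  have hTM : (T : Set G) ⊆ (M : Set G) := Subgroup.subset_closure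
  have main : ∀ n : ℕ, ∀ g, g ∈ D ^ n → g ∈ (M : Set G) * ((R : Set G) * (V : Set G)) := by
    intro n
    induction n with
    | zero =>
      intro g hg
      rw [pow_zero, Set.mem_one] at hg
      subst hg
      exact ⟨1, M.one_mem, 1 * 1, Set.mul_mem_mul (Finset.mem_coe.2 hR1) hV1, by simp⟩
    | succ n ih =>
      intro g hg
      rw [pow_succ] at hg
      obtain ⟨g', hg', d, hd, rfl⟩ := hg
      obtain ⟨m, hm, y, hy, rfl⟩ := ih g' hg'
      obtain ⟨ρ, hρ, u, hu, rfl⟩ := hy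
      have hud : u * d ∈ D := hVDmul (Set.mul_mem_mul hu hd)
      have hρd : ρ * (u * d) ∈ ρ • D := ⟨u * d, hud, rfl⟩
      obtain ⟨c, hcC, hcmem⟩ := Set.mem_iUnion₂.1 ((hCf ρ hρ).2 hρd)
      obtain ⟨u₂, hu₂, hceq⟩ := hcmem
      have hcD : c ∈ ρ • D := (hCf ρ hρ).1 (Finset.mem_coe.2 hcC)
      have hcO : c ∈ (O : Set G) := by
        obtain ⟨d', hd', rfl⟩ := hcD
        simpa [smul_eq_mul] using O.mul_mem (hRO hρ) (hDO hd')
      obtain ⟨hlH, hlO, hρfR, hufV, hdec⟩ := hkey c hcO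
      have hTmem : lf c ∈ (T : Set G) := by
        refine Finset.mem_coe.2 (Finset.mem_biUnion.2 ⟨ρ, Finset.mem_coe.1 hρ, ?_⟩)
        exact Finset.mem_image_of_mem lf hcC
      refine ⟨m * lf c, M.mul_mem hm (hTM hTmem), ρf c * (uf c * u₂),
        Set.mul_mem_mul hρfR (V.mul_mem hufV hu₂), ?_⟩
      have hceq' : c * u₂ = ρ * (u * d) := by simpa [smul_eq_mul] using hceq
      rw [hdec] at hceq'
      show m * lf c * (ρf c * (uf c * u₂)) = m * (ρ * u) * d
      have hassoc : (m * lf c) * (ρf c * (uf c * u₂)) = m * ((lf c * ρf c * uf c) * u₂) := by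
        group
      rw [hassoc, hceq']
      group
  have hTO : (T : Set G) ⊆ (O : Set G) := fun t ht => (Subgroup.mem_inf.1 (hTsub ht)).2
  have hMO : (M : Set G) ⊆ (O : Set G) := fun x hx => (Subgroup.closure_le O).2 hTO hx
  refine ⟨T, hTsub, (R : Set G) * (V : Set G), aux_mul_subset hRO hVOset,
    R.finite_toSet.isCompact.mul hVcomp, ?_⟩
  apply Set.Subset.antisymm
  · exact aux_mul_subset hMO (aux_mul_subset hRO hVOset)
  · intro o ho
    obtain ⟨n, hn⟩ := hmemD o ho
    exact main n o hn
end

section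
/- Let G be a t.d.l.c. group, U a compact open subgroup of G, and R a (not necessarily closed) subgroup of G such that G = RU. If R ∩ U contains a non-trivial normal subgroup of R, then U contains a non-trivial compact subgroup that is normal in G. -/
open scoped Pointwise

open scoped Pointwise

theorem stmt6 (G : Type*) [Group G] [TopologicalSpace G] [IsTopologicalGroup G] [T2Space G] [TotallyDisconnectedSpace G] [LocallyCompactSpace G]
    (U : Subgroup G) (hUcompact : IsCompact (U : Set G)) (hUopen : IsOpen (U : Set G))
    (R : Subgroup G) (hRU : (R : Set G) * (U : Set G) = Set.univ)
    (hK : ∃ K : Subgroup G, K ≠ ⊥ ∧ K ≤ R ⊓ U ∧ ∀ r ∈ R, ∀ k ∈ K, r * k * r⁻¹ ∈ K) :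
    ∃ N : Subgroup G, N ≠ ⊥ ∧ N ≤ U ∧ IsCompact (N : Set G) ∧ N.Normal := by
  obtain ⟨K, hKne, hKle, hKnorm⟩ := hK
  -- rKr⁻¹ = K for r ∈ R (both inclusions from hKnorm)
  -- The normal closure of K is contained in U.
  have hN0 : Subgroup.normalClosure (K : Set G) ≤ U := by
    rw [Subgroup.normalClosure]
    rw [Subgroup.closure_le]
    rintro x hx
    rw [Group.mem_conjugatesOfSet_iff] at hx
    obtain ⟨k, hk, hconj⟩ := hx
    rw [isConj_iff] at hconj
    obtain ⟨c, hc⟩ := hconj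
    -- write c⁻¹ = r * u, so c = u⁻¹ * r⁻¹
    have : c⁻¹ ∈ (R : Set G) * (U : Set G) := by rw [hRU]; trivial
    obtain ⟨r, hr, u, hu, hru⟩ := this
    have hc' : c = u⁻¹ * r⁻¹ := by
      have : c⁻¹ = r * u := hru.symm
      rw [← inv_inv c, this, mul_inv_rev]
    subst hc'
    have hk' : r⁻¹ * k * r ∈ K := by
      have := hKnorm r⁻¹ (R.inv_mem hr) k hk
      simpa using this
    have hkU : r⁻¹ * k * r ∈ U := (hKle.trans inf_le_right) hk'
    have : u⁻¹ * (r⁻¹ * k * r) * u ∈ U :=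
      U.mul_mem (U.mul_mem (U.inv_mem hu) hkU) hu
    rw [← hc]
    convert this using 1
    group
    exact SetLike.mem_coe
  refine ⟨(Subgroup.normalClosure (K : Set G)).topologicalClosure, ?_, ?_, ?_, ?_⟩
  · intro h
    apply hKne
    rw [eq_bot_iff]
    calc K ≤ Subgroup.normalClosure (K : Set G) := Subgroup.le_normalClosure
      _ ≤ (Subgroup.normalClosure (K : Set G)).topologicalClosure :=
          Subgroup.le_topologicalClosure _
      _ = ⊥ := h
  · exact closure_minimal hN0 hUcompact.isClosed
  · exact hUcompact.of_isClosed_subset isClosed_closure (closure_minimal hN0 hUcompact.isClosed)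
  · exact Subgroup.is_normal_topologicalClosure _
end

section
/- Let G be a regionally expansive t.d.l.c. group. If G is quasi-discrete, i.e. the quasi-center QZ(G) is dense in G, then G is discrete. -/
open scoped Pointwise

open scoped Pointwise

theorem stmt7 (G : Type*) [Group G] [TopologicalSpace G] [IsTopologicalGroup G] [T2Space G] [TotallyDisconnectedSpace G] [LocallyCompactSpace G]
    (hre : RegionallyExpansive G) (hqd : Dense (QuasiCenter G)) :
    DiscreteTopology G := by
  obtain ⟨O, W, hOopen, ⟨S, hSO, hScomp, hSgen⟩, hWO, hWopen, hWcomp, hcore⟩ := hre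
  -- pick quasi-central elements near every point
  have hq : ∀ s : G, ∃ q : G, q ∈ QuasiCenter G ∧ s ∈ q • (W : Set G) := by
    intro s
    have hne : (s • (W : Set G)).Nonempty := ⟨s, 1, W.one_mem, mul_one s⟩
    obtain ⟨q, hqW, hqQZ⟩ := hqd.inter_open_nonempty _ (hWopen.smul s) hne
    obtain ⟨w, hw, hws⟩ := hqW
    refine ⟨q, hqQZ, w⁻¹, W.inv_mem hw, ?_⟩
    simp only [smul_eq_mul] at hws ⊢
    rw [← hws]; group
  choose q hq1 hq2 using hq
  -- cover S by finitely many cosets of quasi-central elements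
  obtain ⟨t, -, hscov⟩ := hScomp.elim_nhds_subcover (fun s => q s • (W : Set G))
    (fun s _ => (hWopen.smul (q s)).mem_nhds (hq2 s))
  -- the open subgroup V0
  set V0 : Subgroup G := W ⊓ ⨅ s ∈ t, Subgroup.centralizer {q s} with hV0def
  have hV0open : IsOpen (V0 : Set G) := by
    have hco : (V0 : Set G)
        = (W : Set G) ∩ ⋂ s ∈ t, (Subgroup.centralizer {q s} : Set G) := by
      simp [hV0def]
    rw [hco]
    exact hWopen.inter (isOpen_biInter_finset fun s _ => hq1 s)
  have hV0W : V0 ≤ W := inf_le_left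
  have hV0cent : ∀ s ∈ t, V0 ≤ Subgroup.centralizer {q s} := by
    intro s hs
    exact inf_le_right.trans (iInf₂_le s hs)
  -- tube lemma : an identity nbhd B whose W-conjugates lie in V0
  have tube : ∃ B ∈ nhds (1 : G), ∀ x ∈ (W : Set G), ∀ b ∈ B, x * b * x⁻¹ ∈ V0 := by
    have hcont : Continuous fun p : G × G => p.1 * p.2 * p.1⁻¹ := by fun_prop
    have hmem : ∀ w : G, ∃ Uw ∈ nhds w, ∃ Bw ∈ nhds (1 : G),
        ∀ x ∈ Uw, ∀ b ∈ Bw, x * b * x⁻¹ ∈ (V0 : Set G) := by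
      intro w
      have h1 : {p : G × G | p.1 * p.2 * p.1⁻¹ ∈ (V0 : Set G)} ∈ nhds (w, (1 : G)) := by
        have : (fun p : G × G => p.1 * p.2 * p.1⁻¹) (w, 1) ∈ (V0 : Set G) := by
          simpa using V0.one_mem
        exact hcont.continuousAt.preimage_mem_nhds (hV0open.mem_nhds this)
      rw [mem_nhds_prod_iff] at h1
      obtain ⟨Uw, hUw, Bw, hBw, hsub⟩ := h1
      exact ⟨Uw, hUw, Bw, hBw, fun x hx b hb => hsub (Set.mk_mem_prod hx hb)⟩
    choose Uw hUw Bw hBw hprop using hmem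
    obtain ⟨t2, -, ht2⟩ := hWcomp.elim_nhds_subcover Uw (fun w _ => hUw w)
    refine ⟨⋂ w ∈ t2, Bw w, ?_, ?_⟩
    · exact (Filter.biInter_finset_mem t2).mpr fun w _ => hBw w
    · intro x hx b hb
      obtain ⟨w, hwt2, hxU⟩ := Set.mem_iUnion₂.mp (ht2 hx)
      exact hprop w x hxU b (Set.mem_iInter₂.mp hb w hwt2)
  obtain ⟨B, hB, hBprop⟩ := tube
  -- the subgroup N generated by W-conjugates of B
  set gens : Set G := {x : G | ∃ w ∈ (W : Set G), ∃ b ∈ B, x = w * b * w⁻¹} with hgens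
  set N : Subgroup G := Subgroup.closure gens with hNdef
  have hNV0 : N ≤ V0 := by
    rw [hNdef, Subgroup.closure_le]
    rintro x ⟨w, hw, b, hb, rfl⟩
    exact hBprop w hw b hb
  have hBN : B ⊆ (N : Set G) := fun b hb =>
    Subgroup.subset_closure ⟨1, W.one_mem, b, hb, by group⟩
  have hNopen : IsOpen (N : Set G) :=
    Subgroup.isOpen_of_mem_nhds N (Filter.mem_of_superset hB hBN)
  -- W normalizes N
  have hWnorm : ∀ w' ∈ W, ∀ n ∈ N, w' * n * w'⁻¹ ∈ N := by
    intro w' hw' n hn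
    have hmap : Subgroup.map (MulAut.conj w').toMonoidHom N ≤ N := by
      rw [hNdef, MonoidHom.map_closure, Subgroup.closure_le]
      rintro x ⟨y, ⟨w, hw, b, hb, rfl⟩, rfl⟩
      refine Subgroup.subset_closure ⟨w' * w, W.mul_mem hw' hw, b, hb, ?_⟩
      simp [MulAut.conj]; group
    exact hmap ⟨n, hn, by simp [MulAut.conj]⟩
  -- O normalizes N
  have hnormalizer : O ≤ Subgroup.normalizer (N : Set G) := by
    rw [← hSgen, Subgroup.closure_le]
    intro s hs
    obtain ⟨s', hs't, hsmem⟩ := Set.mem_iUnion₂.mp (hscov hs)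
    obtain ⟨w, hw, hws⟩ := hsmem
    simp only [smul_eq_mul] at hws
    -- hws : q s' * w = s
    have hcent : ∀ m ∈ N, q s' * m * (q s')⁻¹ = m := by
      intro m hm
      have hc := Subgroup.mem_centralizer_iff.mp (hV0cent s' hs't (hNV0 hm)) (q s') rfl
      rw [hc]; group
    have hcent' : ∀ m ∈ N, (q s')⁻¹ * m * q s' = m := by
      intro m hm
      have hc := Subgroup.mem_centralizer_iff.mp (hV0cent s' hs't (hNV0 hm)) (q s') rfl
      rw [mul_assoc, ← hc]; group
    rw [SetLike.mem_coe, Subgroup.mem_normalizer_iff]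
    intro n
    constructor
    · intro hn
      have h1 : w * n * w⁻¹ ∈ N := hWnorm w hw n hn
      have heq : s * n * s⁻¹ = q s' * (w * n * w⁻¹) * (q s')⁻¹ := by
        rw [← hws]; group
      rw [heq, hcent _ h1]; exact h1
    · intro hn
      have h1 : w * n * w⁻¹ = (q s')⁻¹ * (s * n * s⁻¹) * q s' := by
        rw [← hws]; group
      have h2 : w * n * w⁻¹ ∈ N := by
        rw [h1, hcent' _ hn]; exact hn
      have h3 := hWnorm w⁻¹ (W.inv_mem hw) _ h2
      have h4 : w⁻¹ * (w * n * w⁻¹) * w⁻¹⁻¹ = n := by group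
      rwa [h4] at h3
  -- N is trivial via the normal core hypothesis
  have hNO : N ≤ O := fun n hn => hWO (hV0W (hNV0 hn))
  have hNsubnormal : (N.subgroupOf O).Normal := by
    constructor
    intro n hn g
    rw [Subgroup.mem_subgroupOf] at hn ⊢
    have := (Subgroup.mem_normalizer_iff.mp (hnormalizer g.2) (n : G)).mp hn
    simpa using this
  have hle : N.subgroupOf O ≤ (W.subgroupOf O).normalCore := by
    haveI := hNsubnormal
    refine Subgroup.normal_le_normalCore.mpr ?_
    intro n hn
    rw [Subgroup.mem_subgroupOf] at hn ⊢
    exact hV0W (hNV0 hn)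
  have hNbot : N = ⊥ := by
    rw [eq_bot_iff]
    intro n hn
    have h1 : (⟨n, hNO hn⟩ : O) ∈ N.subgroupOf O := by
      rw [Subgroup.mem_subgroupOf]; exact hn
    have h2 := hle h1
    rw [hcore, Subgroup.mem_bot] at h2
    have : n = 1 := congrArg Subtype.val h2
    simp [this]
  rw [discreteTopology_iff_isOpen_singleton_one]
  have : (N : Set G) = {1} := by rw [hNbot]; simp
  rwa [this] at hNopen
end

section
/- Let G be a regionally expansive t.d.l.c. group with trivial quasi-center. Then every filtering family of non-trivial closed normal subgroups of G has non-trivial intersection; in particular, every non-trivial closed normal subgroup of G contains a minimal non-trivial closed normal subgroup of G. -/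
open scoped Pointwise

open scoped Pointwise

universe u v

/-- A normal subgroup meeting an open neighbourhood of `1` trivially is contained in the
quasi-center; if the quasi-center is trivial, it is trivial. -/
lemma discrete_normal_eq_bot {G : Type u} [Group G] [TopologicalSpace G] [IsTopologicalGroup G]
    (hqz : QuasiCenter G = {1}) {N : Subgroup G} (hN : N.Normal)
    {W : Set G} (hW : IsOpen W) (hWmem : (1 : G) ∈ W)
    (htriv : ∀ x ∈ N, x ∈ W → x = 1) : N = ⊥ := by
  rw [Subgroup.eq_bot_iff_forall]
  intro n hn
  have hcont : Continuous fun g : G => g * n * g⁻¹ * n⁻¹ := by fun_prop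
  have hT : IsOpen ((fun g : G => g * n * g⁻¹ * n⁻¹) ⁻¹' W) := hW.preimage hcont
  have h1T : (1 : G) ∈ (fun g : G => g * n * g⁻¹ * n⁻¹) ⁻¹' W := by
    simp [hWmem]
  have hsub : (fun g : G => g * n * g⁻¹ * n⁻¹) ⁻¹' W ⊆
      (Subgroup.centralizer {n} : Set G) := by
    intro g hg
    have hmem : g * n * g⁻¹ * n⁻¹ ∈ N := N.mul_mem (hN.conj_mem n hn g) (N.inv_mem hn)
    have h1 : g * n * g⁻¹ * n⁻¹ = 1 := htriv _ hmem hg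
    have h2 : g * n = n * g := by
      have : g * n * g⁻¹ = n := by
        rw [mul_inv_eq_one] at h1
        exact h1
      calc g * n = (g * n * g⁻¹) * g := by group
        _ = n * g := by rw [this]
    exact Subgroup.mem_centralizer_singleton_iff.mpr h2
  have hopen : IsOpen ((Subgroup.centralizer {n} : Subgroup G) : Set G) :=
    Subgroup.isOpen_of_mem_nhds _ (Filter.mem_of_superset (hT.mem_nhds h1T) hsub)
  have : n ∈ QuasiCenter G := hopen
  rw [hqz] at this
  exact this

/-- Key lemma: the filtering-intersection property. -/
lemma filtering_key {G : Type u} [Group G] [TopologicalSpace G] [IsTopologicalGroup G]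
    [T2Space G] (hre : RegionallyExpansive G) (hqz : QuasiCenter G = {1})
    (ι : Type v) (hι : Nonempty ι) (N : ι → Subgroup G)
    (hbot : ∀ i, N i ≠ ⊥) (hclosed : ∀ i, IsClosed ((N i : Set G)))
    (hnormal : ∀ i, (N i).Normal) (hfil : ∀ i j, ∃ k, N k ≤ N i ⊓ N j) :
    (⨅ i, N i) ≠ ⊥ := by
  obtain ⟨O, W, hOopen, ⟨S, hSO, hScomp, hSgen⟩, hWO, hWopen, hWcomp, hcore⟩ := hre
  intro hInf
  -- the symmetric compact generating set
  set A : Set G := S ∪ S⁻¹ ∪ (W : Set G) with hA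
  have hAcomp : IsCompact A := (hScomp.union hScomp.inv).union hWcomp
  have hAO : A ⊆ (O : Set G) := by
    intro a ha
    rcases ha with (h | h) | h
    · exact hSO h
    · exact O.inv_mem_iff.mp (hSO (Set.mem_inv.mp h))
    · exact hWO h
  have hAsymm : A ∪ A⁻¹ = A := by
    apply Set.union_eq_self_of_subset_right
    intro a ha
    rw [Set.mem_inv] at ha
    rcases ha with (h | h) | h
    · exact Or.inl (Or.inr h)
    · exact Or.inl (Or.inl (by simpa using h))
    · exact Or.inr (W.inv_mem_iff.mp h)
  have hclA : Subgroup.closure A = O := by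
    apply le_antisymm
    · rw [Subgroup.closure_le]; exact hAO
    · rw [← hSgen]
      exact Subgroup.closure_mono (fun s hs => Or.inl (Or.inl hs))
  have hmemA : ∀ o : G, o ∈ O → o ∈ Submonoid.closure A := by
    intro o ho
    have h1 : o ∈ (Subgroup.closure A).toSubmonoid := by
      rw [hclA]; exact ho
    rw [Subgroup.closure_toSubmonoid, hAsymm] at h1
    exact h1
  -- a small open neighbourhood of 1 contained in all conjugates a W a⁻¹, a ∈ A
  have hcover : A ⊆ ⋃ a ∈ A, a • (W : Set G) := by
    intro a ha
    refine Set.mem_iUnion₂.mpr ⟨a, ha, ?_⟩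
    rw [Set.mem_smul_set_iff_inv_smul_mem]
    simp [W.one_mem]
  obtain ⟨F, hFA, hFfin, hFcover⟩ :=
    hAcomp.elim_finite_subcover_image (fun a _ => hWopen.smul a) hcover
  set V : Set G := ⋂ f ∈ F, (fun g => f⁻¹ * g * f) ⁻¹' (W : Set G) with hV
  have hVopen : IsOpen V := by
    apply hFfin.isOpen_biInter
    intro f _
    exact hWopen.preimage (by fun_prop)
  have h1V : (1 : G) ∈ V := by
    refine Set.mem_iInter₂.mpr fun f _ => ?_
    simp [W.one_mem]
  have hVconj : ∀ a ∈ A, ∀ g ∈ V, a⁻¹ * g * a ∈ W := by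
    intro a ha g hg
    obtain ⟨f, hfF, hafW⟩ := Set.mem_iUnion₂.mp (hFcover ha)
    rw [Set.mem_smul_set_iff_inv_smul_mem, smul_eq_mul] at hafW
    have hgf : f⁻¹ * g * f ∈ W := Set.mem_iInter₂.mp hg f hfF
    have : a⁻¹ * g * a = (f⁻¹ * a)⁻¹ * (f⁻¹ * g * f) * (f⁻¹ * a) := by group
    rw [this]
    exact W.mul_mem (W.mul_mem (W.inv_mem hafW) hgf) hafW
  -- the compact sets
  have hWclosed : IsClosed (W : Set G) := hWcomp.isClosed
  set E : ι → Set G := fun i => (N i : Set G) ∩ ((W : Set G) \ V) with hE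
  by_cases hne : ∀ i, (E i).Nonempty
  · have hdir : Directed (· ⊇ ·) E := by
      intro i j
      obtain ⟨k, hk⟩ := hfil i j
      refine ⟨k, ?_, ?_⟩
      · exact Set.inter_subset_inter_left _ (fun x hx => (hk hx).1)
      · exact Set.inter_subset_inter_left _ (fun x hx => (hk hx).2)
    obtain ⟨x, hx⟩ :=
      IsCompact.nonempty_iInter_of_directed_nonempty_isCompact_isClosed E hdir hne
        (fun i => (hWcomp.diff hVopen).inter_left (hclosed i))
        (fun i => (hclosed i).inter (hWclosed.sdiff hVopen))
    have hx1 : x = 1 := by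
      have : x ∈ ⨅ i, N i := Subgroup.mem_iInf.mpr fun i => (Set.mem_iInter.mp hx i).1
      rw [hInf] at this
      exact this
    have := (Set.mem_iInter.mp hx hι.some).2.2
    rw [hx1] at this
    exact this h1V
  · push_neg at hne
    obtain ⟨i, hEi⟩ := hne
    have hCV : ∀ x, x ∈ N i → x ∈ W → x ∈ V := by
      intro x hxN hxW
      by_contra hxV
      exact Set.eq_empty_iff_forall_notMem.mp hEi x ⟨hxN, hxW, hxV⟩
    -- stability under conjugation by the monoid generated by A
    have hconj : ∀ o ∈ Submonoid.closure A,
        ∀ x, x ∈ N i → x ∈ W → o⁻¹ * x * o ∈ N i ∧ o⁻¹ * x * o ∈ W := by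
      intro o ho
      induction ho using Submonoid.closure_induction with
      | mem a ha =>
        intro x hxN hxW
        constructor
        · have := (hnormal i).conj_mem x hxN a⁻¹
          rwa [inv_inv] at this
        · exact hVconj a ha x (hCV x hxN hxW)
      | one =>
        intro x hxN hxW
        simpa using ⟨hxN, hxW⟩
      | mul o o' ho ho' iho iho' =>
        intro x hxN hxW
        have h1 := iho x hxN hxW
        have h2 := iho' (o⁻¹ * x * o) h1.1 h1.2
        have heq : (o * o')⁻¹ * x * (o * o') = o'⁻¹ * (o⁻¹ * x * o) * o' := by group
        rw [heq]
        exact h2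
    -- every element of N i ∩ W lies in the normal core of W in O, hence is trivial
    have htriv : ∀ x ∈ N i, x ∈ (W : Set G) → x = 1 := by
      intro x hxN hxW
      have hxO : x ∈ O := hWO hxW
      have hmem : (⟨x, hxO⟩ : O) ∈ (W.subgroupOf O).normalCore := by
        intro b
        rw [Subgroup.mem_subgroupOf]
        have hb : ((b⁻¹ : O) : G) ∈ Submonoid.closure A := hmemA _ b⁻¹.2
        have := (hconj _ hb x hxN hxW).2
        simpa using this
      rw [hcore, Subgroup.mem_bot] at hmem
      exact congrArg Subtype.val hmem
    exact hbot i (discrete_normal_eq_bot hqz (hnormal i) hWopen W.one_mem htriv)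

/-- Zorn's lemma for minimal elements. -/
lemma zorn_min_aux {α : Type*} [PartialOrder α] (s : Set α)
    (ih : ∀ c ⊆ s, IsChain (· ≤ ·) c → ∀ y ∈ c, ∃ lb ∈ s, ∀ z ∈ c, lb ≤ z)
    (x : α) (hxs : x ∈ s) : ∃ m ∈ s, m ≤ x ∧ ∀ z ∈ s, z ≤ m → z = m := by
  obtain ⟨m, hxm, hm⟩ := zorn_le_nonempty₀ (α := αᵒᵈ) (OrderDual.ofDual ⁻¹' s)
    (fun c hcs hc y hy => by
      obtain ⟨lb, hlbs, hlb⟩ := ih (OrderDual.ofDual '' c)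
        (by rintro _ ⟨z, hz, rfl⟩; exact hcs hz)
        (by
          rintro _ ⟨z, hz, rfl⟩ _ ⟨z', hz', rfl⟩ hne
          rcases hc hz hz' (fun h => hne (congrArg _ h)) with h | h
          · exact Or.inr h
          · exact Or.inl h)
        (OrderDual.ofDual y) ⟨y, hy, rfl⟩
      exact ⟨OrderDual.toDual lb, hlbs, fun z hz => hlb _ ⟨z, hz, rfl⟩⟩)
    (OrderDual.toDual x) hxs
  exact ⟨OrderDual.ofDual m, hm.1, hxm, fun z hzs hzm => le_antisymm hzm (hm.2 hzs hzm)⟩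

theorem stmt8 (G : Type u) [Group G] [TopologicalSpace G] [IsTopologicalGroup G] [T2Space G] [TotallyDisconnectedSpace G] [LocallyCompactSpace G]
    (hre : RegionallyExpansive G) (hqz : QuasiCenter G = {1}) :
    (∀ (ι : Type v), Nonempty ι → ∀ N : ι → Subgroup G,
      (∀ i, N i ≠ ⊥) → (∀ i, IsClosed ((N i : Set G))) → (∀ i, (N i).Normal) →
      (∀ i j, ∃ k, N k ≤ N i ⊓ N j) → (⨅ i, N i) ≠ ⊥) ∧
    (∀ N : Subgroup G, N ≠ ⊥ → N.Normal → IsClosed (N : Set G) →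
      ∃ M : Subgroup G, IsMinimalClosedNormal M ∧ M ≤ N) := by
  constructor
  · exact fun ι hι N hbot hclosed hnormal hfil =>
      filtering_key hre hqz ι hι N hbot hclosed hnormal hfil
  · intro N hNbot hNnorm hNclosed
    set s : Set (Subgroup G) :=
      {M | M ≠ ⊥ ∧ M.Normal ∧ IsClosed (M : Set G) ∧ M ≤ N} with hs
    have hNs : N ∈ s := ⟨hNbot, hNnorm, hNclosed, le_rfl⟩
    have ih : ∀ c ⊆ s, IsChain (· ≤ ·) c → ∀ y ∈ c, ∃ lb ∈ s, ∀ z ∈ c, lb ≤ z := by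
      intro c hcs hc y hy
      refine ⟨sInf c, ⟨?_, ?_, ?_, ?_⟩, fun z hz => sInf_le hz⟩
      · have : (⨅ M : c, (M : Subgroup G)) ≠ ⊥ := by
          refine filtering_key hre hqz c ⟨⟨y, hy⟩⟩ (fun M => (M : Subgroup G))
            (fun M => (hcs M.2).1) (fun M => (hcs M.2).2.2.1)
            (fun M => (hcs M.2).2.1) ?_
          intro i j
          by_cases hij : (i : Subgroup G) = (j : Subgroup G)
          · exact ⟨i, le_inf le_rfl hij.le⟩
          · rcases hc i.2 j.2 hij with h | h
            · exact ⟨i, le_inf le_rfl h⟩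
            · exact ⟨j, le_inf h le_rfl⟩
        rwa [sInf_eq_iInf' c]
      · constructor
        intro n hn g
        rw [Subgroup.mem_sInf] at hn ⊢
        intro M hM
        exact ((hcs hM).2.1).conj_mem n (hn M hM) g
      · have : ((sInf c : Subgroup G) : Set G) = ⋂ M ∈ c, (M : Set G) :=
          Subgroup.coe_sInf c
        rw [this]
        exact isClosed_biInter fun M hM => (hcs hM).2.2.1
      · exact (sInf_le hy).trans (hcs hy).2.2.2
    obtain ⟨m, hms, hmN, hmin⟩ := zorn_min_aux s ih N hNs
    exact ⟨m, ⟨hms.1, hms.2.1, hms.2.2.1, fun M hM1 hM2 hM3 hM4 =>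
      hmin M ⟨hM1, hM2, hM3, hM4.trans hms.2.2.2⟩ hM4⟩, hms.2.2.2⟩
end

section
/- Let G be a regionally expansive t.d.l.c. group that has no non-trivial quasi-discrete closed normal subgroup. Then the set M(G) of minimal non-trivial closed normal subgroups of G is finite, and the intersection over all N in M(G) of the quasi-centralizers QC_G(N) is the trivial subgroup. -/
open scoped Pointwise

open scoped Pointwise

set_option linter.unusedSectionVars false

section Aux

variable {G : Type*} [Group G] [TopologicalSpace G] [IsTopologicalGroup G]

lemma qcOne (N : Subgroup G) : (1 : G) ∈ QuasiCentralizer N := by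
  refine ⟨N, le_rfl, ?_, fun v _ => by rw [one_mul, mul_one]⟩
  have h : {k : ↥N | (k : G) ∈ N} = Set.univ := Set.eq_univ_of_forall fun k => k.2
  rw [h]; exact isOpen_univ

lemma qcMul {N : Subgroup G} {a b : G} (ha : a ∈ QuasiCentralizer N)
    (hb : b ∈ QuasiCentralizer N) : a * b ∈ QuasiCentralizer N := by
  obtain ⟨V₁, hV₁N, hV₁o, hV₁c⟩ := ha
  obtain ⟨V₂, hV₂N, hV₂o, hV₂c⟩ := hb
  refine ⟨V₁ ⊓ V₂, inf_le_left.trans hV₁N, ?_, ?_⟩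
  · have h : {k : ↥N | (k : G) ∈ V₁ ⊓ V₂}
        = {k : ↥N | (k : G) ∈ V₁} ∩ {k : ↥N | (k : G) ∈ V₂} := by
      ext k; simp [Subgroup.mem_inf]
    rw [h]; exact hV₁o.inter hV₂o
  · intro v hv
    obtain ⟨h1, h2⟩ := Subgroup.mem_inf.1 hv
    calc a * b * v = a * (b * v) := by rw [mul_assoc]
      _ = a * (v * b) := by rw [hV₂c v h2]
      _ = a * v * b := by rw [mul_assoc]
      _ = v * a * b := by rw [hV₁c v h1]
      _ = v * (a * b) := by rw [mul_assoc]

lemma qcInv {N : Subgroup G} {a : G} (ha : a ∈ QuasiCentralizer N) :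
    a⁻¹ ∈ QuasiCentralizer N := by
  obtain ⟨V, hVN, hVo, hVc⟩ := ha
  exact ⟨V, hVN, hVo, fun v hv => ((show Commute a v from hVc v hv).inv_left).eq⟩

lemma qcConj {N : Subgroup G} (hN : N.Normal) (h : G) {a : G} (ha : a ∈ QuasiCentralizer N) :
    h * a * h⁻¹ ∈ QuasiCentralizer N := by
  obtain ⟨V, hVN, hVo, hVc⟩ := ha
  have hmem : ∀ x : G, x ∈ V.comap ((MulAut.conj h⁻¹).toMonoidHom) ↔ h⁻¹ * x * h ∈ V := by
    intro x
    rw [Subgroup.mem_comap]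
    simp [MulAut.conj_apply]
  refine ⟨V.comap ((MulAut.conj h⁻¹).toMonoidHom), ?_, ?_, ?_⟩
  · intro x hx
    rw [hmem] at hx
    have := hN.conj_mem _ (hVN hx) h
    have he : h * (h⁻¹ * x * h) * h⁻¹ = x := by group
    rwa [he] at this
  · have hcont : Continuous (fun k : ↥N =>
        (⟨h⁻¹ * (k : G) * h, by simpa using hN.conj_mem _ k.2 h⁻¹⟩ : ↥N)) := by
      apply Continuous.subtype_mk
      exact (continuous_const.mul continuous_subtype_val).mul continuous_const
    have hset : {k : ↥N | (k : G) ∈ V.comap ((MulAut.conj h⁻¹).toMonoidHom)}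
        = (fun k : ↥N => (⟨h⁻¹ * (k : G) * h,
            by simpa using hN.conj_mem _ k.2 h⁻¹⟩ : ↥N)) ⁻¹' {k : ↥N | (k : G) ∈ V} := by
      ext k
      simp only [Set.mem_preimage, Set.mem_setOf_eq, hmem]
    rw [hset]
    exact hVo.preimage hcont
  · intro v hv
    rw [hmem] at hv
    have hc := hVc _ hv
    calc h * a * h⁻¹ * v = h * (a * (h⁻¹ * v * h)) * h⁻¹ := by group
      _ = h * ((h⁻¹ * v * h) * a) * h⁻¹ := by rw [hc]
      _ = v * (h * a * h⁻¹) := by group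

lemma centralizer_isClosed [T2Space G] (s : Set G) :
    IsClosed ((Subgroup.centralizer s : Subgroup G) : Set G) := by
  have h : ((Subgroup.centralizer s : Subgroup G) : Set G)
      = ⋂ x ∈ s, {g : G | x * g = g * x} := by
    ext g
    simp only [SetLike.mem_coe, Subgroup.mem_centralizer_iff, Set.mem_iInter, Set.mem_setOf_eq]
  rw [h]
  exact isClosed_biInter fun x _ =>
    isClosed_eq (continuous_const.mul continuous_id) (continuous_id.mul continuous_const)

lemma conj_mem_centralizer {N : Subgroup G} (hN : N.Normal) {h : G}
    (hh : h ∈ Subgroup.centralizer (N : Set G)) (g : G) :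
    g * h * g⁻¹ ∈ Subgroup.centralizer (N : Set G) := by
  rw [Subgroup.mem_centralizer_iff] at hh ⊢
  intro n hn
  have h1 : g⁻¹ * n * g ∈ N := by
    have := hN.conj_mem n hn g⁻¹
    rwa [inv_inv] at this
  calc n * (g * h * g⁻¹) = g * ((g⁻¹ * n * g) * h) * g⁻¹ := by group
    _ = g * (h * (g⁻¹ * n * g)) * g⁻¹ := by rw [hh _ h1]
    _ = (g * h * g⁻¹) * n := by group

lemma dense_quasiCenter_of_comm {H : Type*} [Group H] [TopologicalSpace H]
    (hcomm : ∀ a b : H, a * b = b * a) : Dense (QuasiCenter H) := by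
  have h : QuasiCenter H = Set.univ := Set.eq_univ_of_forall fun g => by
    have h2 : ((Subgroup.centralizer {g} : Subgroup H) : Set H) = Set.univ :=
      Set.eq_univ_of_forall fun y =>
        Subgroup.mem_centralizer_iff.2 fun x _ => hcomm x y
    show IsOpen _
    rw [h2]; exact isOpen_univ
  rw [h]; exact dense_univ


lemma eq_one_of_mem_qc
    (hnoqd : ∀ N : Subgroup G, N.Normal → IsClosed (N : Set G) →
      Dense (QuasiCenter ↥N) → N = ⊥)
    (N : Subgroup G) (hN : N.Normal) (hNc : IsClosed (N : Set G))
    {x : G} (hxN : x ∈ N) (hxqc : x ∈ QuasiCentralizer N) : x = 1 := by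
  classical
  set S : Set G := (N : Set G) ∩ QuasiCentralizer N with hS
  set Q₀ : Subgroup G := Subgroup.closure S with hQ₀
  have hQ₀qc : ∀ y ∈ Q₀, y ∈ QuasiCentralizer N := by
    intro y hy
    induction hy using Subgroup.closure_induction with
    | mem z hz => exact hz.2
    | one => exact qcOne N
    | mul a b _ _ ha hb => exact qcMul ha hb
    | inv a _ ha => exact qcInv ha
  have hQ₀N : Q₀ ≤ N := (Subgroup.closure_le N).2 Set.inter_subset_left
  have hQ₀norm : Q₀.Normal := by
    constructor
    intro n hn g
    induction hn using Subgroup.closure_induction with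
    | mem z hz => exact Subgroup.subset_closure ⟨hN.conj_mem z hz.1 g, qcConj hN g hz.2⟩
    | one => simpa using Q₀.one_mem
    | mul a b _ _ ha hb =>
        have he : g * (a * b) * g⁻¹ = (g * a * g⁻¹) * (g * b * g⁻¹) := by group
        rw [he]; exact mul_mem ha hb
    | inv a _ ha =>
        have he : g * a⁻¹ * g⁻¹ = (g * a * g⁻¹)⁻¹ := by group
        rw [he]; exact inv_mem ha
  haveI := hQ₀norm
  set Q : Subgroup G := Q₀.topologicalClosure with hQdef
  have hQnorm : Q.Normal := Subgroup.is_normal_topologicalClosure Q₀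
  have hQc : IsClosed (Q : Set G) := Subgroup.isClosed_topologicalClosure Q₀
  have hQN : Q ≤ N := Subgroup.topologicalClosure_minimal Q₀ hQ₀N hNc
  have hdense : Dense (QuasiCenter ↥Q) := by
    have hsub : {q : ↥Q | (q : G) ∈ Q₀} ⊆ QuasiCenter ↥Q := by
      intro q hq
      obtain ⟨V, hVN, hVo, hVc⟩ := hQ₀qc _ hq
      show IsOpen ((Subgroup.centralizer {q} : Subgroup ↥Q) : Set ↥Q)
      apply Subgroup.isOpen_mono (H₁ := V.subgroupOf Q)
      · intro y hy
        rw [Subgroup.mem_subgroupOf] at hy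
        refine Subgroup.mem_centralizer_iff.2 fun z hz => ?_
        rw [Set.mem_singleton_iff] at hz
        subst hz
        exact Subtype.ext (hVc (y : G) hy)
      · have h : ((V.subgroupOf Q : Subgroup ↥Q) : Set ↥Q)
            = (fun k : ↥Q => (⟨(k : G), hQN k.2⟩ : ↥N)) ⁻¹' {k : ↥N | (k : G) ∈ V} := by
          ext k
          simp [Subgroup.mem_subgroupOf]
        rw [h]
        exact hVo.preimage (Continuous.subtype_mk continuous_subtype_val _)
    have hd : Dense {q : ↥Q | (q : G) ∈ Q₀} := by
      intro q
      rw [closure_subtype]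
      have himg : Subtype.val '' {q : ↥Q | (q : G) ∈ Q₀} = (Q₀ : Set G) := by
        ext g
        constructor
        · rintro ⟨y, hy, rfl⟩; exact hy
        · intro hg; exact ⟨⟨g, Q₀.le_topologicalClosure hg⟩, hg, rfl⟩
      rw [himg, ← Subgroup.topologicalClosure_coe]
      exact q.2
    exact hd.mono hsub
  have hQbot : Q = ⊥ := hnoqd Q hQnorm hQc hdense
  have hmem : x ∈ Q := Q₀.le_topologicalClosure (Subgroup.subset_closure ⟨hxN, hxqc⟩)
  rw [hQbot] at hmem
  exact Subgroup.mem_bot.1 hmem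



lemma lemA
    (hre : RegionallyExpansive G)
    (hnoqd : ∀ N : Subgroup G, N.Normal → IsClosed (N : Set G) →
      Dense (QuasiCenter ↥N) → N = ⊥) :
    ∃ W U : Subgroup G, IsCompact (W : Set G) ∧ IsOpen (U : Set G) ∧
      ∀ N : Subgroup G, N.Normal → IsClosed (N : Set G) → N ≠ ⊥ →
        ∃ x : G, x ∈ N ∧ x ∈ W ∧ x ∉ U := by
  classical
  obtain ⟨O, W, hOopen, ⟨S, hSO, hScomp, hSgen⟩, hWO, hWopen, hWcomp, hcore⟩ := hre
  have hcover : S ⊆ ⋃ g : G, g • (W : Set G) := by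
    intro s _
    refine Set.mem_iUnion.2 ⟨s, ?_⟩
    rw [Set.mem_smul_set_iff_inv_smul_mem, smul_eq_mul]
    simpa using W.one_mem
  obtain ⟨F, hF⟩ := hScomp.elim_finite_subcover (fun g : G => g • (W : Set G))
    (fun g => hWopen.smul g) hcover
  set φ : G → Subgroup G := fun f =>
    W.comap ((MulAut.conj f).toMonoidHom) ⊓ W.comap ((MulAut.conj f⁻¹).toMonoidHom) with hφ
  set U : Subgroup G := W ⊓ F.inf φ with hU
  have hconjmem : ∀ (f x : G), x ∈ W.comap ((MulAut.conj f).toMonoidHom) ↔ f * x * f⁻¹ ∈ W := by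
    intro f x
    rw [Subgroup.mem_comap]
    simp [MulAut.conj_apply]
  have hcomap_open : ∀ f : G,
      IsOpen ((W.comap ((MulAut.conj f).toMonoidHom) : Subgroup G) : Set G) := by
    intro f
    rw [Subgroup.coe_comap]
    apply IsOpen.preimage ?_ hWopen
    have h : ⇑((MulAut.conj f).toMonoidHom) = fun x => f * x * f⁻¹ := by
      ext x; simp [MulAut.conj_apply]
    rw [h]
    exact (continuous_const.mul continuous_id).mul continuous_const
  have hUopen : IsOpen (U : Set G) := by
    have hs : ∀ (s : Finset G), IsOpen ((s.inf φ : Subgroup G) : Set G) := by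
      intro s
      induction s using Finset.induction_on with
      | empty => rw [Finset.inf_empty, Subgroup.coe_top]; exact isOpen_univ
      | insert _ _ hx ih =>
          rw [Finset.inf_insert, Subgroup.coe_inf]
          refine IsOpen.inter ?_ ih
          rw [hφ]
          rw [Subgroup.coe_inf]
          exact (hcomap_open _).inter (hcomap_open _)
    rw [hU, Subgroup.coe_inf]
    exact hWopen.inter (hs F)
  refine ⟨W, U, hWcomp, hUopen, ?_⟩
  intro N hNnorm hNc hNbot
  by_contra hcon
  push_neg at hcon
  have hNW_le_U : N ⊓ W ≤ U := by
    intro x hx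
    obtain ⟨h1, h2⟩ := Subgroup.mem_inf.1 hx
    exact hcon x h1 h2
  have hWnorm : ∀ w ∈ W, w ∈ Subgroup.normalizer ((N ⊓ W : Subgroup G) : Set G) := by
    intro w hw
    rw [Subgroup.mem_normalizer_iff]
    intro x
    constructor
    · intro hx
      obtain ⟨hxN, hxW⟩ := Subgroup.mem_inf.1 hx
      exact Subgroup.mem_inf.2 ⟨hNnorm.conj_mem x hxN w, mul_mem (mul_mem hw hxW) (inv_mem hw)⟩
    · intro hx
      obtain ⟨hxN, hxW⟩ := Subgroup.mem_inf.1 hx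
      have h1 : w⁻¹ * (w * x * w⁻¹) * w = x := by group
      have h2 := hNnorm.conj_mem _ hxN w⁻¹
      rw [inv_inv] at h2
      rw [h1] at h2
      refine Subgroup.mem_inf.2 ⟨h2, ?_⟩
      have h3 : x = w⁻¹ * (w * x * w⁻¹) * w := h1.symm
      rw [h3]
      exact mul_mem (mul_mem (inv_mem hw) hxW) hw
  have hFnorm : ∀ f ∈ F, f ∈ Subgroup.normalizer ((N ⊓ W : Subgroup G) : Set G) := by
    intro f hf
    rw [Subgroup.mem_normalizer_iff]
    intro x
    constructor
    · intro hx
      have hxU : x ∈ U := hNW_le_U hx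
      have hxφ : x ∈ φ f := (Finset.inf_le hf : F.inf φ ≤ φ f) (Subgroup.mem_inf.1 hxU).2
      have hxW' : f * x * f⁻¹ ∈ W := by
        have h := (Subgroup.mem_inf.1 hxφ).1
        rwa [hconjmem] at h
      exact Subgroup.mem_inf.2 ⟨hNnorm.conj_mem x (Subgroup.mem_inf.1 hx).1 f, hxW'⟩
    · intro hx
      have hxU : f * x * f⁻¹ ∈ U := hNW_le_U hx
      have h1 : x ∈ W := by
        have h2 : f * x * f⁻¹ ∈ φ f := (Finset.inf_le hf : F.inf φ ≤ φ f) (Subgroup.mem_inf.1 hxU).2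
        have h3 := (Subgroup.mem_inf.1 h2).2
        rw [hconjmem] at h3
        have he : f⁻¹ * (f * x * f⁻¹) * f⁻¹⁻¹ = x := by group
        rwa [he] at h3
      have h4 : x ∈ N := by
        have h5 := hNnorm.conj_mem _ (Subgroup.mem_inf.1 hx).1 f⁻¹
        have he : f⁻¹ * (f * x * f⁻¹) * f⁻¹⁻¹ = x := by group
        rwa [he] at h5
      exact Subgroup.mem_inf.2 ⟨h4, h1⟩
  have hOnorm : O ≤ Subgroup.normalizer ((N ⊓ W : Subgroup G) : Set G) := by
    rw [← hSgen]
    apply (Subgroup.closure_le _).2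
    intro s hs
    obtain ⟨f, hfF, hsf⟩ := Set.mem_iUnion₂.1 (hF hs)
    rw [Set.mem_smul_set_iff_inv_smul_mem, smul_eq_mul] at hsf
    have hmem : s ∈ Subgroup.normalizer ((N ⊓ W : Subgroup G) : Set G) := by
      have he : s = f * (f⁻¹ * s) := by group
      rw [he]
      exact mul_mem (hFnorm f hfF) (hWnorm _ hsf)
    exact hmem
  have hsub_norm : ((N ⊓ W).subgroupOf O).Normal := by
    constructor
    intro n hn g
    rw [Subgroup.mem_subgroupOf] at hn ⊢
    have hg := Subgroup.mem_normalizer_iff.1 (hOnorm g.2)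
    have he : ((g * n * g⁻¹ : ↥O) : G) = (g : G) * (n : G) * (g : G)⁻¹ := by
      push_cast; rfl
    rw [he]
    exact (hg (n : G)).1 hn
  haveI := hsub_norm
  have hle : (N ⊓ W).subgroupOf O ≤ (W.subgroupOf O).normalCore :=
    Subgroup.normal_le_normalCore.2 (fun x hx => by
      rw [Subgroup.mem_subgroupOf] at hx ⊢
      exact (Subgroup.mem_inf.1 hx).2)
  rw [hcore] at hle
  have hNW : N ⊓ W = ⊥ := by
    rw [eq_bot_iff]
    intro x hx
    have hxO : x ∈ O := hWO (Subgroup.mem_inf.1 hx).2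
    have hmem : (⟨x, hxO⟩ : ↥O) ∈ (N ⊓ W).subgroupOf O := by
      rw [Subgroup.mem_subgroupOf]; exact hx
    have hb := hle hmem
    rw [Subgroup.mem_bot] at hb
    rw [Subgroup.mem_bot]
    simpa using Subtype.ext_iff.1 hb
  have hbotopen : IsOpen (((⊥ : Subgroup ↥N)) : Set ↥N) := by
    have h : ((⊥ : Subgroup ↥N) : Set ↥N) = {k : ↥N | (k : G) ∈ W} := by
      ext k
      simp only [Subgroup.coe_bot, Set.mem_singleton_iff, Set.mem_setOf_eq]
      constructor
      · rintro rfl; simpa using W.one_mem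
      · intro hk
        have hm : (k : G) ∈ N ⊓ W := Subgroup.mem_inf.2 ⟨k.2, hk⟩
        rw [hNW, Subgroup.mem_bot] at hm
        exact Subtype.ext (by simpa using hm)
    rw [h]
    exact hWopen.preimage continuous_subtype_val
  have hdense : Dense (QuasiCenter ↥N) := by
    have h : QuasiCenter ↥N = Set.univ :=
      Set.eq_univ_of_forall (fun g => Subgroup.isOpen_mono bot_le hbotopen)
    rw [h]; exact dense_univ
  exact hNbot (hnoqd N hNnorm hNc hdense)



lemma exists_minimal_normal [T2Space G]
    (W U : Subgroup G) (hWcomp : IsCompact (W : Set G)) (hUopen : IsOpen (U : Set G))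
    (hA : ∀ N : Subgroup G, N.Normal → IsClosed (N : Set G) → N ≠ ⊥ →
      ∃ x : G, x ∈ N ∧ x ∈ W ∧ x ∉ U)
    (K : Subgroup G) (hKnorm : K.Normal) (hKc : IsClosed (K : Set G)) (hKbot : K ≠ ⊥) :
    ∃ N₀ : Subgroup G, IsMinimalClosedNormal N₀ ∧ N₀ ≤ K := by
  classical
  set s : Set (Subgroup G)ᵒᵈ :=
    {N : (Subgroup G)ᵒᵈ | (OrderDual.ofDual N).Normal ∧
      IsClosed ((OrderDual.ofDual N : Subgroup G) : Set G) ∧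
      OrderDual.ofDual N ≠ ⊥ ∧ OrderDual.ofDual N ≤ K} with hs
  have hKs : OrderDual.toDual K ∈ s := ⟨hKnorm, hKc, hKbot, le_rfl⟩
  have hzorn := zorn_le_nonempty₀ s ?ih (OrderDual.toDual K) hKs
  case ih =>
    intro c hcs hchain y hyc
    set c' : Set (Subgroup G) := {N : Subgroup G | OrderDual.toDual N ∈ c} with hc'
    have hcmem : ∀ N ∈ c', N.Normal ∧ IsClosed (N : Set G) ∧ N ≠ ⊥ ∧ N ≤ K :=
      fun N hN => hcs hN
    haveI : Nonempty c' := ⟨⟨OrderDual.ofDual y, hyc⟩⟩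
    set t : c' → Set G := fun N => (((N : Subgroup G) : Set G) ∩ (U : Set G)ᶜ) ∩ (W : Set G)
      with ht
    have hmono : ∀ (A B : c'), (A : Subgroup G) ≤ (B : Subgroup G) → t A ⊆ t B := by
      intro A B hAB x hx
      exact ⟨⟨hAB hx.1.1, hx.1.2⟩, hx.2⟩
    have hdir : Directed (· ⊇ ·) t := by
      intro A B
      rcases eq_or_ne (A : Subgroup G) (B : Subgroup G) with h | h
      · exact ⟨A, le_refl _, by rw [ht]; intro x hx; exact ⟨⟨h ▸ hx.1.1, hx.1.2⟩, hx.2⟩⟩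
      · rcases hchain A.2 B.2 (fun hc => h (congrArg OrderDual.ofDual hc)) with hle | hle
        · -- toDual A ≤ toDual B in dual, i.e. B ≤ A
          exact ⟨B, hmono B A hle, le_refl _⟩
        · exact ⟨A, le_refl _, hmono A B hle⟩
    have hnonempty : ∀ A : c', (t A).Nonempty := by
      intro A
      obtain ⟨hn, hcl, hb, _⟩ := hcmem A A.2
      obtain ⟨x, h1, h2, h3⟩ := hA A hn hcl hb
      exact ⟨x, ⟨h1, h3⟩, h2⟩
    have hcomp : ∀ A : c', IsCompact (t A) :=
      fun A => hWcomp.inter_left ((hcmem A A.2).2.1.inter hUopen.isClosed_compl)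
    have hclosed : ∀ A : c', IsClosed (t A) :=
      fun A => ((hcmem A A.2).2.1.inter hUopen.isClosed_compl).inter hWcomp.isClosed
    obtain ⟨z, hz⟩ :=
      IsCompact.nonempty_iInter_of_directed_nonempty_isCompact_isClosed t hdir hnonempty
        hcomp hclosed
    rw [Set.mem_iInter] at hz
    have hzU : z ∉ U := (hz ⟨OrderDual.ofDual y, hyc⟩).1.2
    have hz1 : z ≠ 1 := fun h => hzU (h ▸ U.one_mem)
    set L : Subgroup G := sInf c' with hL
    have hzL : z ∈ L := Subgroup.mem_sInf.2 fun p hp => (hz ⟨p, hp⟩).1.1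
    have hLnorm : L.Normal := by
      constructor
      intro n hn g
      rw [Subgroup.mem_sInf] at hn ⊢
      intro p hp
      exact ((hcmem p hp).1).conj_mem n (hn p hp) g
    have hLc : IsClosed (L : Set G) := by
      have h : (L : Set G) = ⋂ N ∈ c', (N : Set G) := Subgroup.coe_sInf c'
      rw [h]
      exact isClosed_biInter fun N hN => (hcmem N hN).2.1
    have hLbot : L ≠ ⊥ := by
      intro h
      rw [h, Subgroup.mem_bot] at hzL
      exact hz1 hzL
    have hLK : L ≤ K := le_trans (sInf_le hyc) (hcs hyc).2.2.2
    refine ⟨OrderDual.toDual L, ⟨hLnorm, hLc, hLbot, hLK⟩, ?_⟩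
    intro N hN
    exact sInf_le (show OrderDual.ofDual N ∈ c' from hN)
  obtain ⟨m, hKm, hmem_s, hmax⟩ := hzorn
  set N₀ : Subgroup G := OrderDual.ofDual m with hN₀
  obtain ⟨hm_norm, hm_c, hm_bot, hm_le⟩ := hmem_s
  refine ⟨N₀, ⟨hm_bot, hm_norm, hm_c, ?_⟩, hm_le⟩
  intro M hMbot hMnorm hMc hMle
  have hMs : OrderDual.toDual M ∈ s := ⟨hMnorm, hMc, hMbot, hMle.trans hm_le⟩
  have h1 : m ≤ OrderDual.toDual M := hMle
  have h2 : OrderDual.toDual M ≤ m := hmax hMs h1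
  exact le_antisymm hMle h2


lemma inf_centralizers_eq_bot [T2Space G]
    (hnoqd : ∀ N : Subgroup G, N.Normal → IsClosed (N : Set G) →
      Dense (QuasiCenter ↥N) → N = ⊥)
    (W U : Subgroup G) (hWcomp : IsCompact (W : Set G)) (hUopen : IsOpen (U : Set G))
    (hA : ∀ N : Subgroup G, N.Normal → IsClosed (N : Set G) → N ≠ ⊥ →
      ∃ x : G, x ∈ N ∧ x ∈ W ∧ x ∉ U) :
    (⨅ (N : Subgroup G) (_ : IsMinimalClosedNormal N),
      Subgroup.centralizer (N : Set G)) = ⊥ := by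
  by_contra hne
  set T : Subgroup G := ⨅ (N : Subgroup G) (_ : IsMinimalClosedNormal N),
    Subgroup.centralizer (N : Set G) with hT
  have hTnorm : T.Normal := by
    constructor
    intro n hn g
    simp only [hT, Subgroup.mem_iInf] at hn ⊢
    intro N hNmin
    exact conj_mem_centralizer hNmin.2.1 (hn N hNmin) g
  have hTc : IsClosed (T : Set G) := by
    have h : (T : Set G) = ⋂ (N : Subgroup G) (_ : IsMinimalClosedNormal N),
        ((Subgroup.centralizer (N : Set G) : Subgroup G) : Set G) := by
      rw [hT, Subgroup.coe_iInf]
      refine Set.iInter_congr fun N => ?_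
      exact Subgroup.coe_iInf
    rw [h]
    exact isClosed_iInter fun N => isClosed_iInter fun _ => centralizer_isClosed _
  obtain ⟨N₀, hN₀min, hN₀T⟩ := exists_minimal_normal W U hWcomp hUopen hA T hTnorm hTc hne
  have hTle : T ≤ Subgroup.centralizer (N₀ : Set G) :=
    le_trans (iInf_le _ N₀) (iInf_le _ hN₀min)
  have hcomm : ∀ a ∈ N₀, ∀ b ∈ N₀, a * b = b * a := by
    intro a ha b hb
    have h1 : a ∈ Subgroup.centralizer (N₀ : Set G) := hTle (hN₀T ha)
    exact (Subgroup.mem_centralizer_iff.1 h1 b hb).symm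
  have hdense : Dense (QuasiCenter ↥N₀) :=
    dense_quasiCenter_of_comm fun a b => Subtype.ext (hcomm _ a.2 _ b.2)
  exact hN₀min.1 (hnoqd N₀ hN₀min.2.1 hN₀min.2.2.1 hdense)

lemma minimals_finite [T2Space G]
    (hnoqd : ∀ N : Subgroup G, N.Normal → IsClosed (N : Set G) →
      Dense (QuasiCenter ↥N) → N = ⊥)
    (W U : Subgroup G) (hWcomp : IsCompact (W : Set G)) (hUopen : IsOpen (U : Set G))
    (hA : ∀ N : Subgroup G, N.Normal → IsClosed (N : Set G) → N ≠ ⊥ →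
      ∃ x : G, x ∈ N ∧ x ∈ W ∧ x ∉ U) :
    {N : Subgroup G | IsMinimalClosedNormal N}.Finite := by
  classical
  by_contra hfin
  have hinf : {N : Subgroup G | IsMinimalClosedNormal N}.Infinite := hfin
  have hcomm : ∀ N M : Subgroup G, IsMinimalClosedNormal N → IsMinimalClosedNormal M →
      N ≠ M → ∀ a ∈ N, ∀ b ∈ M, a * b = b * a := by
    intro N M hN hM hNM a ha b hb
    have hbot : N ⊓ M = ⊥ := by
      by_contra hne
      have hinorm : (N ⊓ M).Normal := by
        constructor
        intro n hn g
        obtain ⟨h1, h2⟩ := Subgroup.mem_inf.1 hn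
        exact Subgroup.mem_inf.2 ⟨hN.2.1.conj_mem n h1 g, hM.2.1.conj_mem n h2 g⟩
      have hic : IsClosed ((N ⊓ M : Subgroup G) : Set G) := by
        rw [Subgroup.coe_inf]
        exact hN.2.2.1.inter hM.2.2.1
      have h1 : N ⊓ M = N := hN.2.2.2 (N ⊓ M) hne hinorm hic inf_le_left
      have h2 : N ⊓ M = M := hM.2.2.2 (N ⊓ M) hne hinorm hic inf_le_right
      exact hNM (h1.symm.trans h2)
    have hc : a * b * a⁻¹ * b⁻¹ ∈ N ⊓ M := by
      refine Subgroup.mem_inf.2 ⟨?_, ?_⟩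
      · have h1 : b * a⁻¹ * b⁻¹ ∈ N := hN.2.1.conj_mem a⁻¹ (inv_mem ha) b
        have he : a * b * a⁻¹ * b⁻¹ = a * (b * a⁻¹ * b⁻¹) := by group
        rw [he]
        exact mul_mem ha h1
      · have h1 : a * b * a⁻¹ ∈ M := hM.2.1.conj_mem b hb a
        exact mul_mem h1 (inv_mem hb)
    rw [hbot, Subgroup.mem_bot] at hc
    calc a * b = (a * b * a⁻¹ * b⁻¹) * (b * a) := by group
      _ = 1 * (b * a) := by rw [hc]
      _ = b * a := one_mul _
  have hTbot := inf_centralizers_eq_bot hnoqd W U hWcomp hUopen hA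
  set ι := {A : Finset (Subgroup G) // ∀ N ∈ A, IsMinimalClosedNormal N} with hι
  haveI : Nonempty ι := ⟨⟨∅, by intro N h; simp at h⟩⟩
  set TA : ι → Subgroup G := fun A => ⨅ (N : Subgroup G) (_ : N ∈ A.1),
    Subgroup.centralizer (N : Set G) with hTA
  have hTAnormal : ∀ A : ι, (TA A).Normal := by
    intro A
    constructor
    intro n hn g
    simp only [hTA, Subgroup.mem_iInf] at hn ⊢
    intro N hNA
    exact conj_mem_centralizer (A.2 N hNA).2.1 (hn N hNA) g
  have hTAclosed : ∀ A : ι, IsClosed ((TA A : Subgroup G) : Set G) := by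
    intro A
    have h : ((TA A : Subgroup G) : Set G) = ⋂ (N : Subgroup G) (_ : N ∈ A.1),
        ((Subgroup.centralizer (N : Set G) : Subgroup G) : Set G) := by
      rw [hTA, Subgroup.coe_iInf]
      exact Set.iInter_congr fun N => Subgroup.coe_iInf
    rw [h]
    exact isClosed_iInter fun N => isClosed_iInter fun _ => centralizer_isClosed _
  have hTAne : ∀ A : ι, TA A ≠ ⊥ := by
    intro A h
    obtain ⟨N', hN'⟩ := (hinf.diff (A.1.finite_toSet)).nonempty
    have hN'min : IsMinimalClosedNormal N' := hN'.1
    have hN'A : N' ∉ A.1 := by simpa using hN'.2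
    have hle : N' ≤ TA A := by
      intro x hx
      simp only [hTA, Subgroup.mem_iInf]
      intro N hNA
      refine Subgroup.mem_centralizer_iff.2 fun n hn => ?_
      exact hcomm N N' (A.2 N hNA) hN'min (by rintro rfl; exact hN'A hNA) n hn x hx
    rw [h] at hle
    exact hN'min.1 (le_bot_iff.1 hle)
  set t : ι → Set G := fun A => (((TA A : Subgroup G) : Set G) ∩ (U : Set G)ᶜ) ∩ (W : Set G)
    with htdef
  have hmono : ∀ (A B : ι), A.1 ⊆ B.1 → t B ⊆ t A := by
    intro A B hAB x hx
    refine ⟨⟨?_, hx.1.2⟩, hx.2⟩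
    have hle : TA B ≤ TA A :=
      le_iInf fun N => le_iInf fun hN => le_trans (iInf_le _ N) (iInf_le _ (hAB hN))
    exact hle hx.1.1
  have hdir : Directed (· ⊇ ·) t := by
    intro A B
    refine ⟨⟨A.1 ∪ B.1, ?_⟩, ?_, ?_⟩
    · intro N hN
      rcases Finset.mem_union.1 hN with h | h
      exacts [A.2 N h, B.2 N h]
    · exact hmono A _ Finset.subset_union_left
    · exact hmono B _ Finset.subset_union_right
  have hne : ∀ A : ι, (t A).Nonempty := by
    intro A
    obtain ⟨x, h1, h2, h3⟩ := hA (TA A) (hTAnormal A) (hTAclosed A) (hTAne A)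
    exact ⟨x, ⟨h1, h3⟩, h2⟩
  have hcomp : ∀ A : ι, IsCompact (t A) :=
    fun A => hWcomp.inter_left ((hTAclosed A).inter hUopen.isClosed_compl)
  have hclosed : ∀ A : ι, IsClosed (t A) :=
    fun A => ((hTAclosed A).inter hUopen.isClosed_compl).inter hWcomp.isClosed
  obtain ⟨z, hz⟩ :=
    IsCompact.nonempty_iInter_of_directed_nonempty_isCompact_isClosed t hdir hne hcomp hclosed
  rw [Set.mem_iInter] at hz
  have hzU : z ∉ U := (hz (Classical.arbitrary ι)).1.2
  have hz1 : z = 1 := by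
    have hzT : z ∈ (⨅ (N : Subgroup G) (_ : IsMinimalClosedNormal N),
        Subgroup.centralizer (N : Set G)) := by
      simp only [Subgroup.mem_iInf]
      intro N hNmin
      have hA1 : ∀ M ∈ ({N} : Finset (Subgroup G)), IsMinimalClosedNormal M := by
        intro M hM
        rw [Finset.mem_singleton] at hM
        rwa [hM]
      have hmem := (hz ⟨{N}, hA1⟩).1.1
      have h2 : TA ⟨{N}, hA1⟩ ≤ Subgroup.centralizer (N : Set G) :=
        le_trans (iInf_le _ N)
          (iInf_le _ (show N ∈ (⟨{N}, hA1⟩ : ι).1 from Finset.mem_singleton_self N))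
      exact h2 hmem
    rw [hTbot] at hzT
    exact Subgroup.mem_bot.1 hzT
  exact hzU (hz1 ▸ U.one_mem)

end Aux

theorem stmt9 (G : Type*) [Group G] [TopologicalSpace G] [IsTopologicalGroup G] [T2Space G] [TotallyDisconnectedSpace G] [LocallyCompactSpace G]
    (hre : RegionallyExpansive G)
    (hnoqd : ∀ N : Subgroup G, N.Normal → IsClosed (N : Set G) →
      Dense (QuasiCenter ↥N) → N = ⊥) :
    {N : Subgroup G | IsMinimalClosedNormal N}.Finite ∧
    (⋂ N ∈ {N : Subgroup G | IsMinimalClosedNormal N}, QuasiCentralizer N) = ({1} : Set G) := by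
  classical
  obtain ⟨W, U, hWcomp, hUopen, hA⟩ := lemA hre hnoqd
  have hTbot := inf_centralizers_eq_bot hnoqd W U hWcomp hUopen hA
  constructor
  · exact minimals_finite hnoqd W U hWcomp hUopen hA
  · apply Set.eq_of_subset_of_subset
    · intro g hg
      have hg' : ∀ N ∈ {N : Subgroup G | IsMinimalClosedNormal N}, g ∈ QuasiCentralizer N :=
        Set.mem_iInter₂.1 hg
      have hgT : g ∈ (⨅ (N : Subgroup G) (_ : IsMinimalClosedNormal N),
          Subgroup.centralizer (N : Set G)) := by
        simp only [Subgroup.mem_iInf]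
        intro N hNmin
        refine Subgroup.mem_centralizer_iff.2 fun n hn => ?_
        have hgqc : g ∈ QuasiCentralizer N := hg' N hNmin
        have hc : g * (n * g⁻¹ * n⁻¹) ∈ QuasiCentralizer N :=
          qcMul hgqc (qcConj hNmin.2.1 n (qcInv hgqc))
        have hcN : g * (n * g⁻¹ * n⁻¹) ∈ N := by
          have h1 : g * n * g⁻¹ ∈ N := hNmin.2.1.conj_mem n hn g
          have he : g * (n * g⁻¹ * n⁻¹) = (g * n * g⁻¹) * n⁻¹ := by group
          rw [he]
          exact mul_mem h1 (inv_mem hn)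
        have h1 : g * (n * g⁻¹ * n⁻¹) = 1 :=
          eq_one_of_mem_qc hnoqd N hNmin.2.1 hNmin.2.2.1 hcN hc
        have h3 : g * n = n * g := by
          calc g * n = (g * (n * g⁻¹ * n⁻¹)) * (n * g) := by group
            _ = 1 * (n * g) := by rw [h1]
            _ = n * g := one_mul _
        exact h3.symm
      rw [hTbot, Subgroup.mem_bot] at hgT
      exact Set.mem_singleton_iff.2 hgT
    · intro g hg
      rw [Set.mem_singleton_iff] at hg
      subst hg
      exact Set.mem_iInter₂.2 fun N _ => qcOne N
end

section
/- Let G be a t.d.l.c. group and H a closed locally normal subgroup of G. If H is regionally expansive and the quasi-centralizer QC_G(H) is contained in H, then G is regionally expansive. -/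
open scoped Pointwise

open scoped Pointwise

lemma my_vanDantzig {G : Type*} [Group G] [TopologicalSpace G] [IsTopologicalGroup G]
    [T2Space G] [TotallyDisconnectedSpace G] [LocallyCompactSpace G]
    {Ω : Set G} (hΩ : IsOpen Ω) (h1 : (1 : G) ∈ Ω) :
    ∃ U : Subgroup G, IsOpen (U : Set G) ∧ IsCompact (U : Set G) ∧ (U : Set G) ⊆ Ω := by
  obtain ⟨K, hKnhds, hKΩ, hKcomp⟩ := local_compact_nhds (hΩ.mem_nhds h1)
  obtain ⟨V, hVclopen, h1V, hVK⟩ :=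
    loc_compact_Haus_tot_disc_of_zero_dim.mem_nhds_iff.1
      ((interior_mem_nhds).2 hKnhds)
  have hVcomp : IsCompact V :=
    hKcomp.of_isClosed_subset hVclopen.isClosed (hVK.trans interior_subset)
  obtain ⟨T, hTnhds, hTmul⟩ :=
    compact_open_separated_mul_right hVcomp hVclopen.isOpen subset_rfl
  obtain ⟨Oo, hOoT, hOoopen, h1Oo⟩ := mem_nhds_iff.mp hTnhds
  set T' : Set G := Oo ∩ Oo⁻¹ with hT'def
  have hT'open : IsOpen T' := hOoopen.inter hOoopen.inv
  have hT'inv : T'⁻¹ = T' := by simp [hT'def, Set.inter_comm]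
  have h1T' : (1 : G) ∈ T' := ⟨h1Oo, by simpa using h1Oo⟩
  have hT'mul : V * T' ⊆ V := fun a ha =>
    hTmul (Set.mul_subset_mul_left (Set.inter_subset_left.trans hOoT) ha)
  let S : Subgroup G := {
    carrier := ⋃ n, T' ^ (n + 1)
    mul_mem' := fun ha hb => by
      rcases Set.mem_iUnion.mp ha with ⟨k, hk⟩
      rcases Set.mem_iUnion.mp hb with ⟨l, hl⟩
      apply Set.mem_iUnion.mpr
      exact ⟨k + 1 + l, by rw [add_assoc, pow_add]; exact Set.mul_mem_mul hk hl⟩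
    one_mem' := Set.mem_iUnion.mpr ⟨0, by simpa using h1T'⟩
    inv_mem' := fun ha => by
      rcases Set.mem_iUnion.mp ha with ⟨k, hk⟩
      apply Set.mem_iUnion.mpr
      refine ⟨k, ?_⟩
      rw [← hT'inv]
      simpa only [inv_pow, Set.mem_inv, inv_inv] using hk }
  have hSopen : IsOpen (S : Set G) := by
    refine isOpen_iUnion fun n => ?_
    rw [pow_succ]
    exact hT'open.mul_left
  have hSsubV : (S : Set G) ⊆ V := by
    have mulpow : ∀ n : ℕ, V * T' ^ (n + 1) ⊆ V := by
      intro n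
      induction n with
      | zero => simpa using hT'mul
      | succ n ih =>
          rw [pow_succ, ← mul_assoc]
          exact (Set.mul_subset_mul_right ih).trans hT'mul
    intro x hx
    rcases Set.mem_iUnion.mp hx with ⟨n, hn⟩
    exact mulpow n ⟨1, h1V, x, hn, one_mul x⟩
  refine ⟨S, hSopen, ?_, hSsubV.trans ((hVK.trans interior_subset).trans hKΩ)⟩
  exact hKcomp.of_isClosed_subset (S.isClosed_of_isOpen hSopen)
    (hSsubV.trans (hVK.trans interior_subset))

theorem stmt13 (G : Type*) [Group G] [TopologicalSpace G] [IsTopologicalGroup G] [T2Space G] [TotallyDisconnectedSpace G] [LocallyCompactSpace G]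
    (H : Subgroup G) (hHclosed : IsClosed (H : Set G))
    (hHlocnorm : IsOpen ((Subgroup.normalizer (H : Set G) : Subgroup G) : Set G))
    (hre : RegionallyExpansive ↥H)
    (hqc : QuasiCentralizer H ⊆ (H : Set G)) :
    RegionallyExpansive G := by
  obtain ⟨OH, WH, hOHopen, ⟨S, hSsub, hScomp, hSgen⟩, hWHle, hWHopen, hWHcomp, hWHcore⟩ := hre
  -- open set Ω of G cutting out WH
  obtain ⟨Ω, hΩopen, hΩeq⟩ := isOpen_induced_iff.mp hWHopen
  -- compact open subgroup U inside the normalizer of H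
  obtain ⟨U, hUopen, hUcomp, hUsub⟩ :=
    my_vanDantzig (G := G) hHlocnorm ((Subgroup.normalizer (H : Set G)).one_mem)
  -- compact open subgroup W inside U ∩ Ω
  have h1Ω : (1 : G) ∈ Ω := by
    have : ((1 : ↥H) : G) ∈ Ω := by
      rw [← Set.mem_preimage, hΩeq]; exact WH.one_mem
    simpa using this
  obtain ⟨W, hWopen, hWcomp, hWsub⟩ :=
    my_vanDantzig (hUopen.inter hΩopen) ⟨U.one_mem, h1Ω⟩
  -- the open compactly generated subgroup O
  set Sg : Set G := (U : Set G) ∪ (Subtype.val '' S) with hSgdef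
  set O : Subgroup G := Subgroup.closure Sg with hOdef
  have hUO : U ≤ O := fun x hx => Subgroup.subset_closure (Or.inl hx)
  have hOopen : IsOpen (O : Set G) := Subgroup.isOpen_mono hUO hUopen
  have hOnorm : O ≤ Subgroup.normalizer (H : Set G) := by
    rw [hOdef, Subgroup.closure_le]
    rintro x (hx | ⟨y, hy, rfl⟩)
    · exact hUsub hx
    · exact Subgroup.le_normalizer y.2
  have hOHsub : ∀ y : ↥H, y ∈ OH → (y : G) ∈ O := by
    intro y hy
    rw [← hSgen] at hy
    have : (H.subtype y) ∈ Subgroup.map H.subtype (Subgroup.closure S) :=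
      Subgroup.mem_map_of_mem _ hy
    rw [MonoidHom.map_closure] at this
    exact Subgroup.closure_mono (Set.subset_union_right) this
  have hWU : (W : Set G) ⊆ (U : Set G) := fun x hx => (hWsub hx).1
  have hWΩ : (W : Set G) ⊆ Ω := fun x hx => (hWsub hx).2
  have hWO : W ≤ O := fun x hx => hUO (hWU hx)
  -- key lemma
  have key : ∀ g : G, g ∈ H →
      (∀ b : ↥O, (b : G) * g * (b : G)⁻¹ ∈ W) → g = 1 := by
    intro g hgH hgP
    have hgW : g ∈ W := by simpa using hgP 1
    have hmemWH : ∀ k : ↥H, (k : G) ∈ Ω → k ∈ WH := by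
      intro k hk
      have : k ∈ (WH : Set ↥H) := by rw [← hΩeq]; exact hk
      exact this
    have hgWH : (⟨g, hgH⟩ : ↥H) ∈ WH := hmemWH _ (hWΩ hgW)
    have hgOH : (⟨g, hgH⟩ : ↥H) ∈ OH := hWHle hgWH
    set x : ↥OH := ⟨⟨g, hgH⟩, hgOH⟩ with hxdef
    have hx : x ∈ (WH.subgroupOf OH).normalCore := by
      intro b
      rw [Subgroup.mem_subgroupOf]
      apply hmemWH
      have hbO : ((b : ↥H) : G) ∈ O := hOHsub _ b.2
      have := hgP ⟨_, hbO⟩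
      have hcoe : ((((b * x * b⁻¹ : ↥OH) : ↥H)) : G)
          = ((b : ↥H) : G) * g * ((b : ↥H) : G)⁻¹ := by
        push_cast [hxdef]
        rfl
      rw [hcoe]
      exact hWΩ this
    rw [hWHcore, Subgroup.mem_bot] at hx
    have : ((x : ↥H) : G) = 1 := by rw [hx]; rfl
    simpa [hxdef] using this
  refine ⟨O, W, hOopen, ⟨Sg, Subgroup.subset_closure, ?_, rfl⟩, hWO, hWopen, hWcomp, ?_⟩
  · exact hUcomp.union (hScomp.image continuous_subtype_val)
  · rw [Subgroup.eq_bot_iff_forall]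
    intro x hx
    have hx' : ∀ b : ↥O, b * x * b⁻¹ ∈ W.subgroupOf O := hx
    set C := (W.subgroupOf O).normalCore with hCdef
    have hxC : x ∈ C := hx
    have hCnormal : C.Normal := Subgroup.normalCore_normal _
    have hCP : ∀ y : ↥O, y ∈ C → ∀ b : ↥O, (b : G) * (y : G) * (b : G)⁻¹ ∈ W := by
      intro y hy b
      have h1 : b * y * b⁻¹ ∈ C := hCnormal.conj_mem y hy b
      have h2 : b * y * b⁻¹ ∈ W.subgroupOf O := (Subgroup.normalCore_le _) h1
      rw [Subgroup.mem_subgroupOf] at h2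
      have : ((b * y * b⁻¹ : ↥O) : G) = (b : G) * (y : G) * (b : G)⁻¹ := by push_cast; rfl
      rwa [this] at h2
    -- n := ↑x centralizes H ⊓ U
    have hcomm : ∀ v ∈ (H ⊓ U : Subgroup G), (x : G) * v = v * (x : G) := by
      intro v hv
      rw [Subgroup.mem_inf] at hv
      have hvO : v ∈ O := hUO hv.2
      set vO : ↥O := ⟨v, hvO⟩ with hvOdef
      have hcC : x * (vO * x⁻¹ * vO⁻¹) ∈ C :=
        C.mul_mem hxC (hCnormal.conj_mem _ (C.inv_mem hxC) vO)
      have hcH : ((x * (vO * x⁻¹ * vO⁻¹) : ↥O) : G) ∈ H := by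
        have hxnorm : (x : G) ∈ Subgroup.normalizer (H : Set G) := hOnorm x.2
        rw [Subgroup.mem_normalizer_iff] at hxnorm
        have h1 : (x : G) * v * (x : G)⁻¹ ∈ H := (hxnorm v).1 hv.1
        have h2 : ((x * (vO * x⁻¹ * vO⁻¹) : ↥O) : G)
            = ((x : G) * v * (x : G)⁻¹) * v⁻¹ := by push_cast; group; rfl
        rw [h2]
        exact H.mul_mem h1 (H.inv_mem hv.1)
      have := key _ hcH (hCP _ hcC)
      have h2 : ((x * (vO * x⁻¹ * vO⁻¹) : ↥O) : G)
          = ((x : G) * v * (x : G)⁻¹) * v⁻¹ := by push_cast; group; rfl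
      rw [h2] at this
      have h3 : (x : G) * v * (x : G)⁻¹ = v := by
        have h4 := mul_eq_one_iff_eq_inv.mp this
        simpa using h4
      calc (x : G) * v = ((x : G) * v * (x : G)⁻¹) * (x : G) := by group
        _ = v * (x : G) := by rw [h3]
    -- deduce ↑x ∈ H via quasi-centralizer
    have hxH : (x : G) ∈ H := by
      apply hqc
      refine ⟨H ⊓ U, inf_le_left, ?_, hcomm⟩
      have hset : {k : ↥H | (k : G) ∈ H ⊓ U} = Subtype.val ⁻¹' (U : Set G) := by
        ext k
        simp [Subgroup.mem_inf, k.2]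
      rw [hset]
      exact hUopen.preimage continuous_subtype_val
    have := key _ hxH (hCP x hxC)
    exact Subtype.ext this
end

section
/- Let G be a robustly monolithic t.d.l.c. group and H a non-trivial closed subgroup of G such that the monolith Mon(G) normalizes H. Then Mon(G) is contained in H, and H is itself robustly monolithic with Mon(H) = Mon(G). In particular, Mon(G) is a topologically simple robustly monolithic group. -/
open scoped Pointwise

open scoped Pointwise

section MonolithAux

variable {G : Type*} [Group G] [TopologicalSpace G]

lemma monolith_le {N : Subgroup G} (h1 : N ≠ ⊥) (h2 : N.Normal) (h3 : IsClosed (N : Set G)) :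
    Monolith G ≤ N :=
  iInf_le_of_le N (iInf_le_of_le h1 (iInf_le_of_le h2 (iInf_le _ h3)))

lemma mem_monolith {x : G} :
    x ∈ Monolith G ↔ ∀ N : Subgroup G, N ≠ ⊥ → N.Normal → IsClosed (N : Set G) → x ∈ N := by
  simp [Monolith, Subgroup.mem_iInf]

lemma monolith_normal : (Monolith G).Normal := by
  constructor
  intro a ha g
  rw [mem_monolith] at ha ⊢
  intro N h1 h2 h3
  exact h2.conj_mem a (ha N h1 h2 h3) g

lemma monolith_closed : IsClosed ((Monolith G) : Set G) := by
  have h : ((Monolith G) : Set G) =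
      ⋂ (N : Subgroup G) (_ : N ≠ ⊥) (_ : N.Normal) (_ : IsClosed (N : Set G)), (N : Set G) := by
    simp [Monolith, Subgroup.coe_iInf]
  rw [h]
  exact isClosed_iInter fun N => isClosed_iInter fun _ => isClosed_iInter fun _ =>
    isClosed_iInter fun hc => hc

end MonolithAux

section Transfer

variable {A B : Type*} [Group A] [TopologicalSpace A] [Group B] [TopologicalSpace B]

lemma discreteTopology_transfer [IsTopologicalGroup A] (e : A ≃* B) (he : Continuous e)
    (hd : DiscreteTopology B) : DiscreteTopology A := by
  rw [discreteTopology_iff_isOpen_singleton_one]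
  have h1 : ({1} : Set A) = e ⁻¹' {1} := by
    ext x
    simp only [Set.mem_preimage, Set.mem_singleton_iff]
    constructor
    · rintro rfl; exact map_one e
    · intro hx; exact e.injective (by simpa using hx)
  rw [h1]
  exact (isOpen_discrete _).preimage he

lemma topologicallySimple_transfer (e : A ≃* B) (he : Continuous e)
    (hs : TopologicallySimple A) : TopologicallySimple B := by
  obtain ⟨hnt, h⟩ := hs
  haveI := hnt
  refine ⟨e.injective.nontrivial, fun N hNn hNc => ?_⟩
  have h1 := h (N.comap e.toMonoidHom) (hNn.comap _)
    (by rw [Subgroup.coe_comap]; exact hNc.preimage he)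
  have h2 : Subgroup.map e.toMonoidHom (N.comap e.toMonoidHom) = N :=
    Subgroup.map_comap_eq_self_of_surjective e.surjective N
  rcases h1 with h1 | h1
  · left; rw [← h2, h1, Subgroup.map_bot]
  · right; rw [← h2, h1, Subgroup.map_top_of_surjective _ e.surjective]

lemma regionallyExpansive_transfer (e : A ≃* B) (he : Continuous e) (hes : Continuous e.symm)
    (h : RegionallyExpansive A) : RegionallyExpansive B := by
  obtain ⟨O, W, hOopen, ⟨S, hSO, hScomp, hSclos⟩, hWO, hWopen, hWcomp, hcore⟩ := h
  have himg : ∀ T : Subgroup A, ((T.map e.toMonoidHom : Subgroup B) : Set B) = ⇑e.symm ⁻¹' T := by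
    intro T
    rw [Subgroup.coe_map]
    ext b
    simp only [Set.mem_image, Set.mem_preimage, SetLike.mem_coe]
    constructor
    · rintro ⟨a, ha, rfl⟩; simpa using ha
    · intro hb; exact ⟨e.symm b, hb, by simp⟩
  refine ⟨O.map e.toMonoidHom, W.map e.toMonoidHom, ?_,
    ⟨⇑e '' S, ?_, hScomp.image he, ?_⟩, Subgroup.map_mono hWO, ?_, ?_, ?_⟩
  · rw [himg]; exact hOopen.preimage hes
  · rw [Subgroup.coe_map]; exact Set.image_mono hSO
  · rw [← hSclos, MonoidHom.map_closure]; rfl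
  · rw [himg]; exact hWopen.preimage hes
  · rw [Subgroup.coe_map]; exact hWcomp.image he
  · rw [Subgroup.eq_bot_iff_forall]
    intro x hx
    have h1 : ∀ b : (O.map e.toMonoidHom),
        b * x * b⁻¹ ∈ (W.map e.toMonoidHom).subgroupOf (O.map e.toMonoidHom) := hx
    have hxm : e.symm (x : B) ∈ O := by
      have h2 := x.2
      rw [← SetLike.mem_coe, himg] at h2
      exact h2
    set a : ↥O := ⟨e.symm (x : B), hxm⟩ with ha
    have hmem : a ∈ (W.subgroupOf O).normalCore := by
      show ∀ b : ↥O, b * a * b⁻¹ ∈ W.subgroupOf O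
      intro b
      set b' : ↥(O.map e.toMonoidHom) := ⟨e (b : A), Subgroup.mem_map_of_mem _ b.2⟩ with hb'
      have h3 := Subgroup.mem_subgroupOf.1 (h1 b')
      rw [← SetLike.mem_coe, himg] at h3
      have h4 : e.symm ((b' : B) * (x : B) * (b' : B)⁻¹) ∈ W := h3
      rw [Subgroup.mem_subgroupOf]
      simp only [hb', map_mul, map_inv, MulEquiv.symm_apply_apply] at h4
      simpa [ha] using h4
    rw [hcore, Subgroup.mem_bot] at hmem
    have h5 : e.symm (x : B) = 1 := by
      have := congrArg (Subtype.val) hmem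
      simpa [ha] using this
    have h6 : (x : B) = 1 := by
      have := congrArg e h5
      simpa using this
    exact Subtype.ext (by simpa using h6)

end Transfer

lemma cont_subgroupOfEquivOfLe {G : Type*} [Group G] [TopologicalSpace G] {K H : Subgroup G}
    (h : K ≤ H) : Continuous (Subgroup.subgroupOfEquivOfLe h) := by
  exact Continuous.subtype_mk (continuous_subtype_val.comp continuous_subtype_val) _

lemma cont_subgroupOfEquivOfLe_symm {G : Type*} [Group G] [TopologicalSpace G] {K H : Subgroup G}
    (h : K ≤ H) : Continuous (Subgroup.subgroupOfEquivOfLe h).symm := by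
  exact Continuous.subtype_mk (Continuous.subtype_mk continuous_subtype_val _) _

lemma cont_topEquiv {G : Type*} [Group G] [TopologicalSpace G] :
    Continuous (Subgroup.topEquiv (G := G)) :=
  continuous_subtype_val

lemma cont_topEquiv_symm {G : Type*} [Group G] [TopologicalSpace G] :
    Continuous (Subgroup.topEquiv (G := G)).symm :=
  Continuous.subtype_mk continuous_id _

/-- Key lemma: the monolith of a robustly monolithic group is contained in every
non-trivial closed subgroup that it normalizes. -/
lemma monolith_le_of_normalizes {G : Type*} [Group G] [TopologicalSpace G] [IsTopologicalGroup G]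
    [T2Space G] (hG : RobustlyMonolithic G) (K : Subgroup G) (hK : K ≠ ⊥)
    (hKc : IsClosed (K : Set G)) (hKn : Monolith G ≤ Subgroup.normalizer (K : Set G)) : Monolith G ≤ K := by
  obtain ⟨hmono, hnd, hre, hsimple⟩ := hG
  have hN0c : IsClosed ((K.subgroupOf (Monolith G)) : Set ↥(Monolith G)) := by
    have h : ((K.subgroupOf (Monolith G)) : Set ↥(Monolith G)) = ((↑) : ↥(Monolith G) → G) ⁻¹' K := by
      rw [← Subgroup.comap_subtype, Subgroup.coe_comap, Subgroup.coe_subtype]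
    rw [h]; exact hKc.preimage continuous_subtype_val
  have hN0n : (K.subgroupOf (Monolith G)).Normal := by
    constructor
    intro n hn g
    rw [Subgroup.mem_subgroupOf] at hn ⊢
    have hg := Subgroup.mem_normalizer_iff.1 (hKn g.2)
    simpa using (hg n).1 hn
  rcases hsimple.2 _ hN0n hN0c with h0 | h0
  · -- K ∩ M trivial: derive a contradiction
    exfalso
    have hcomm : ∀ m ∈ Monolith G, ∀ k ∈ K, m * k = k * m := by
      intro m hm k hk
      have h1 : m * k * m⁻¹ * k⁻¹ ∈ K :=
        K.mul_mem ((Subgroup.mem_normalizer_iff.1 (hKn hm) k).1 hk) (K.inv_mem hk)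
      have h2 : m * k * m⁻¹ * k⁻¹ ∈ Monolith G := by
        have h3 : k * m⁻¹ * k⁻¹ ∈ Monolith G :=
          monolith_normal.conj_mem m⁻¹ ((Monolith G).inv_mem hm) k
        have h4 := (Monolith G).mul_mem hm h3
        simpa [mul_assoc] using h4
      have hmem : (⟨_, h2⟩ : ↥(Monolith G)) ∈ K.subgroupOf (Monolith G) :=
        Subgroup.mem_subgroupOf.2 h1
      rw [h0, Subgroup.mem_bot] at hmem
      have h5 : m * k * m⁻¹ * k⁻¹ = 1 := congrArg Subtype.val hmem
      have h6 : m * k = (m * k * m⁻¹ * k⁻¹) * (k * m) := by group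
      rw [h6, h5, one_mul]
    have hKC : K ≤ Subgroup.centralizer (Monolith G : Set G) := fun k hk =>
      Subgroup.mem_centralizer_iff.2 fun m hm => hcomm m hm k hk
    have hCne : Subgroup.centralizer (Monolith G : Set G) ≠ ⊥ := fun hbot =>
      hK (le_bot_iff.1 (hbot ▸ hKC))
    have hCnormal : (Subgroup.centralizer (Monolith G : Set G)).Normal := by
      constructor
      intro c hc g
      rw [Subgroup.mem_centralizer_iff] at hc ⊢
      intro m hm
      have h1 : g⁻¹ * m * g ∈ (Monolith G : Set G) := by
        simpa using monolith_normal.conj_mem m hm g⁻¹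
      have h2 := hc _ h1
      have h3 : m * (g * c * g⁻¹) = g * ((g⁻¹ * m * g) * c) * g⁻¹ := by group
      rw [h3, h2]; group
    have hCc : IsClosed ((Subgroup.centralizer (Monolith G : Set G)) : Set G) := by
      have h : ((Subgroup.centralizer (Monolith G : Set G)) : Set G) =
          ⋂ (m : G) (_ : m ∈ Monolith G), {g : G | m * g = g * m} := by
        ext g; simp [Subgroup.mem_centralizer_iff]
      rw [h]
      exact isClosed_iInter fun m => isClosed_iInter fun _ =>
        isClosed_eq (continuous_const.mul continuous_id) (continuous_id.mul continuous_const)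
    have hMC : Monolith G ≤ Subgroup.centralizer (Monolith G : Set G) :=
      monolith_le hCne hCnormal hCc
    obtain ⟨O, W, hOopen, _, hWO, hWopen, _, hcore⟩ := hre
    have hab : ∀ x y : ↥(Monolith G), x * y = y * x := by
      intro x y
      exact Subtype.ext (Subgroup.mem_centralizer_iff.1 (hMC y.2) (x : G) x.2)
    have hab' : ∀ x y : ↥O, x * y = y * x := fun x y => Subtype.ext (hab x y)
    have hWbot : W = ⊥ := by
      have h1 : W.subgroupOf O ≤ (W.subgroupOf O).normalCore := by
        intro a ha
        show ∀ b : ↥O, b * a * b⁻¹ ∈ W.subgroupOf O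
        intro b
        rw [hab' b a, mul_inv_cancel_right]
        exact ha
      have h2 : W.subgroupOf O = ⊥ := le_bot_iff.1 (hcore ▸ h1)
      exact (Subgroup.subgroupOf_eq_bot.1 h2).eq_bot_of_le hWO
    have hopen1 : IsOpen ({1} : Set ↥(Monolith G)) := by
      rw [← Subgroup.coe_bot, ← hWbot]; exact hWopen
    exact hnd (discreteTopology_iff_isOpen_singleton_one.2 hopen1)
  · intro m hm
    have h1 : (⟨m, hm⟩ : ↥(Monolith G)) ∈ K.subgroupOf (Monolith G) := h0 ▸ Subgroup.mem_top _
    exact Subgroup.mem_subgroupOf.1 h1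

theorem stmt17 (G : Type*) [Group G] [TopologicalSpace G] [IsTopologicalGroup G] [T2Space G] [TotallyDisconnectedSpace G] [LocallyCompactSpace G]
    (hG : RobustlyMonolithic G)
    (H : Subgroup G) (hHne : H ≠ ⊥) (hHclosed : IsClosed (H : Set G))
    (hnorm : Monolith G ≤ Subgroup.normalizer (H : Set G)) :
    Monolith G ≤ H ∧ RobustlyMonolithic ↥H ∧
    Subgroup.map H.subtype (Monolith ↥H) = Monolith G ∧
    RobustlyMonolithic ↥(Monolith G) ∧ TopologicallySimple ↥(Monolith G) := by
  have hMH : Monolith G ≤ H := monolith_le_of_normalizes hG H hHne hHclosed hnorm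
  obtain ⟨hmono, hnd, hre, hsimple⟩ := hG
  -- the monolith of G as a subgroup of H
  have hsub_ne : (Monolith G).subgroupOf H ≠ ⊥ := by
    obtain ⟨a, ha⟩ := Subgroup.ne_bot_iff_exists_ne_one.1 hmono
    rw [Subgroup.ne_bot_iff_exists_ne_one]
    refine ⟨⟨⟨(a : G), hMH a.2⟩, Subgroup.mem_subgroupOf.2 a.2⟩, ?_⟩
    intro hcontr
    apply ha
    have h5 : (a : G) = 1 := by
      simpa using congrArg (fun z : ↥((Monolith G).subgroupOf H) => ((z : ↥H) : G)) hcontr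
    exact Subtype.ext (by simpa using h5)
  have hsub_n : ((Monolith G).subgroupOf H).Normal := by
    constructor
    intro n hn g
    rw [Subgroup.mem_subgroupOf] at hn ⊢
    simpa using monolith_normal.conj_mem _ hn (g : G)
  have hsub_c : IsClosed (((Monolith G).subgroupOf H) : Set ↥H) := by
    have h : (((Monolith G).subgroupOf H) : Set ↥H) = ((↑) : ↥H → G) ⁻¹' (Monolith G) := by
      rw [← Subgroup.comap_subtype, Subgroup.coe_comap, Subgroup.coe_subtype]
    rw [h]; exact monolith_closed.preimage continuous_subtype_val
  have hMonH : Monolith ↥H = (Monolith G).subgroupOf H := by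
    refine le_antisymm (monolith_le hsub_ne hsub_n hsub_c) ?_
    intro x hx
    rw [mem_monolith]
    intro N hN1 hN2 hN3
    have hKne : N.map H.subtype ≠ ⊥ := by
      intro hc
      apply hN1
      apply Subgroup.map_injective H.subtype_injective
      rw [hc, Subgroup.map_bot]
    have hKc : IsClosed ((N.map H.subtype : Subgroup G) : Set G) := by
      have h : ((N.map H.subtype : Subgroup G) : Set G) = Subtype.val '' (N : Set ↥H) := by
        rw [Subgroup.coe_map, Subgroup.coe_subtype]
      rw [h]
      exact hHclosed.isClosedEmbedding_subtypeVal.isClosedMap _ hN3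
    have hKnorm : Monolith G ≤ Subgroup.normalizer ((N.map H.subtype : Subgroup G) : Set G) := by
      intro m hm
      rw [Subgroup.mem_normalizer_iff]
      intro g
      constructor
      · rintro ⟨n, hn, rfl⟩
        exact ⟨(⟨m, hMH hm⟩ : ↥H) * n * (⟨m, hMH hm⟩ : ↥H)⁻¹, hN2.conj_mem n hn _,
          by simp [Subgroup.coe_subtype]⟩
      · rintro ⟨n, hn, heq⟩
        refine ⟨(⟨m, hMH hm⟩ : ↥H)⁻¹ * n * (⟨m, hMH hm⟩ : ↥H), ?_, ?_⟩
        · simpa using hN2.conj_mem n hn (⟨m, hMH hm⟩ : ↥H)⁻¹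
        · have h6 : (n : G) = m * g * m⁻¹ := by simpa [Subgroup.coe_subtype] using heq
          simp only [Subgroup.coe_subtype, Subgroup.coe_mul, Subgroup.coe_inv, h6]
          group
    have hMK : Monolith G ≤ N.map H.subtype :=
      monolith_le_of_normalizes ⟨hmono, hnd, hre, hsimple⟩ _ hKne hKc hKnorm
    have hxM : (↑x : G) ∈ Monolith G := Subgroup.mem_subgroupOf.1 hx
    obtain ⟨n, hn, heq⟩ := hMK hxM
    have h7 : n = x := Subtype.ext (by simpa [Subgroup.coe_subtype] using heq)
    rwa [← h7]
  have hmap : Subgroup.map H.subtype (Monolith ↥H) = Monolith G := by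
    rw [hMonH, Subgroup.subgroupOf_map_subtype]
    exact inf_eq_left.2 hMH
  have he1 := cont_subgroupOfEquivOfLe hMH
  have he1s := cont_subgroupOfEquivOfLe_symm hMH
  have hRMH : RobustlyMonolithic ↥H := by
    refine ⟨?_, ?_, ?_, ?_⟩
    · show Monolith ↥H ≠ ⊥
      rw [hMonH]; exact hsub_ne
    · rw [hMonH]
      intro hd
      exact hnd (discreteTopology_transfer (Subgroup.subgroupOfEquivOfLe hMH).symm he1s hd)
    · rw [hMonH]
      exact regionallyExpansive_transfer (Subgroup.subgroupOfEquivOfLe hMH).symm he1s he1 hre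
    · rw [hMonH]
      exact topologicallySimple_transfer (Subgroup.subgroupOfEquivOfLe hMH).symm he1s hsimple
  have hMonM : Monolith ↥(Monolith G) = ⊤ := by
    rw [eq_top_iff]
    intro x _
    rw [mem_monolith]
    intro N h1 h2 h3
    rcases hsimple.2 N h2 h3 with h | h
    · exact absurd h h1
    · rw [h]; trivial
  have hRMM : RobustlyMonolithic ↥(Monolith G) := by
    haveI := hsimple.1
    refine ⟨?_, ?_, ?_, ?_⟩
    · show Monolith ↥(Monolith G) ≠ ⊥
      rw [hMonM]
      intro hc
      obtain ⟨y, hy⟩ := exists_ne (1 : ↥(Monolith G))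
      exact hy (Subgroup.mem_bot.1 (hc ▸ Subgroup.mem_top y))
    · rw [hMonM]
      intro hd
      exact hnd (discreteTopology_transfer Subgroup.topEquiv.symm cont_topEquiv_symm hd)
    · rw [hMonM]
      exact regionallyExpansive_transfer Subgroup.topEquiv.symm cont_topEquiv_symm cont_topEquiv hre
    · rw [hMonM]
      exact topologicallySimple_transfer Subgroup.topEquiv.symm cont_topEquiv_symm hsimple
  exact ⟨hMH, hRMH, hmap, hRMM, hsimple⟩
end
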